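/- arXiv:1903.01465 — 2 statements merged into one kernel-verified Lean document; each statement's English description precedes it below -/
import Mathlib

section
/- The bit vector Z_h satisfying the H&M invariant can be partitioned into consecutive blocks such that each block consists exactly of the positions whose corresponding suffixes (of t0 or t1) share the same length-h prefix; within each block all bits coming from t0 precede all bits coming from t1, and the common length-h prefix of any block is lexicographically smaller than that of any later block. -/
open List Finset

variable {A : Type*}

/-- Length of the longest common prefix of two lists. -/
def lcpLen [DecidableEq A] : List A → List A → ℕ
  | a :: as, b :: bs => if a = b then lcpLen as bs + 1 else 0
  | _, _ => 0

/-- `sa` is the suffix array of `t`: a bijection of `[0, |t|)` listing the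
suffixes of `t` in increasing lexicographic order. -/
def isSuffixArray [LinearOrder A] (t : List A) (sa : ℕ → ℕ) : Prop :=
  Set.BijOn sa (Set.Iio t.length) (Set.Iio t.length) ∧
    ∀ i j, i < j → j < t.length → t.drop (sa i) < t.drop (sa j)

/-- The BWT of `t` w.r.t. the suffix array `sa` (0-based):
`bwt[i] = t[n-1]` if `sa[i] = 0` and `bwt[i] = t[sa[i]-1]` otherwise. -/
def bwtOf [Inhabited A] (t : List A) (sa : ℕ → ℕ) (i : ℕ) : A :=
  if sa i = 0 then t.getD (t.length - 1) default else t.getD (sa i - 1) default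

/-- The BWT of `t` as a list. -/
def bwtList [LinearOrder A] [Inhabited A] (t : List A) (sa : ℕ → ℕ) : List A :=
  List.ofFn (fun i : Fin t.length => bwtOf t sa i)

/-- `t0` and `t1` end with distinct sentinels `$0 < $1` that are smaller than
all other symbols and occur nowhere else in `t0 ++ t1`. -/
def Sentinels [LinearOrder A] [Inhabited A] (t0 t1 : List A) : Prop :=
  t0 ≠ [] ∧ t1 ≠ [] ∧ t0.getLast! < t1.getLast! ∧
  (∀ c ∈ t0 ++ t1, c ≠ t0.getLast! → t0.getLast! < c) ∧
  (∀ c ∈ t0 ++ t1, c ≠ t0.getLast! → c ≠ t1.getLast! → t1.getLast! < c) ∧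
  (t0 ++ t1).count t0.getLast! = 1 ∧ (t0 ++ t1).count t1.getLast! = 1

/-- The multi-string BWT of `t0, t1` w.r.t. a suffix array `sa` of `t0 ++ t1`
(0-based): `bwt01[i] = $0` if `sa[i] = 0`, `bwt01[i] = $1` if `sa[i] = n0`,
and `bwt01[i] = (t0 t1)[sa[i]-1]` otherwise. -/
def mbwt [Inhabited A] (t0 t1 : List A) (sa : ℕ → ℕ) (i : ℕ) : A :=
  if sa i = 0 then t0.getLast!
  else if sa i = t0.length then t1.getLast!
  else (t0 ++ t1).getD (sa i - 1) default

/-- Position (index in `Z`) of the `i`-th (0-based) occurrence of bit `b`. -/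
def nthBitPos (Z : List Bool) (b : Bool) (i : ℕ) : ℕ :=
  ((List.range Z.length).filter (fun k => Z.getD k (!b) == b)).getD i Z.length

/-- The length-`h` prefix of the context (suffix of `t0` or `t1`) associated to
position `p` of the bit vector `Z`: position `p` holds the `r`-th `0`
(resp. `r`-th `1`) where `r` is the number of `0`s (resp. `1`s) before `p`. -/
def keyAt [LinearOrder A] (t0 t1 : List A) (sa0 sa1 : ℕ → ℕ) (h : ℕ)
    (Z : List Bool) (p : ℕ) : List A :=
  if Z.getD p false then (t1.drop (sa1 ((Z.take p).count true))).take h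
  else (t0.drop (sa0 ((Z.take p).count false))).take h

/-- The LCP array of `t` w.r.t. `sa` (0-based), with `-1` at the two ends. -/
def lcpArr [DecidableEq A] (t : List A) (sa : ℕ → ℕ) (i : ℕ) : ℤ :=
  if i = 0 ∨ t.length ≤ i then -1
  else (lcpLen (t.drop (sa (i - 1))) (t.drop (sa i)) : ℤ)

/-- One pass of the H&M algorithm: every bit `b` of `Z` is tagged with the next
symbol `c` of `bwt_b`, and the tagged bits are stably sorted by symbol. -/
def hmStep [LinearOrder A] [Inhabited A] (bwt0 bwt1 : List A) (Z : List Bool) :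
    List Bool :=
  let pairs := (List.range Z.length).map (fun k =>
    let b := Z.getD k false
    let c := if b then bwt1.getD ((Z.take k).count true) default
             else bwt0.getD ((Z.take k).count false) default
    (b, c))
  (pairs.mergeSort (fun p q => decide (p.2 ≤ q.2))).map Prod.fst

/-- The bit vector `Z_h` of the H&M algorithm: `Z_0 = 0^{n0} 1^{n1}` and
`Z_h = hmStep Z_{h-1}`. -/
def hmZ [LinearOrder A] [Inhabited A] (bwt0 bwt1 : List A) (n0 n1 : ℕ) :
    ℕ → List Bool
  | 0 => List.replicate n0 false ++ List.replicate n1 true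
  | h + 1 => hmStep bwt0 bwt1 (hmZ bwt0 bwt1 n0 n1 h)

/-- Id of the block of `Z` containing position `k`: the largest `j ≤ k` with
`B[j] ≠ 0`. -/
def blockIdAt (B : List ℕ) (k : ℕ) : ℕ :=
  ((List.range (k + 1)).filter (fun j => !(B.getD j 0 == 0))).foldr max 0

/-- One pass of the modified H&M algorithm also maintaining the marker array
`B`: bits tagged with their symbol and the id of their block are stably sorted
by symbol; a zero entry `B[j]` receives the value `h` iff a new block of `Z_h`
(a change of the pair (symbol, source-block id)) starts at `j`. -/
def gstep [LinearOrder A] [Inhabited A] (bwt0 bwt1 : List A) (h : ℕ)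
    (ZB : List Bool × List ℕ) : List Bool × List ℕ :=
  let Z := ZB.1
  let B := ZB.2
  let pairs := (List.range Z.length).map (fun k =>
    let b := Z.getD k false
    let c := if b then bwt1.getD ((Z.take k).count true) default
             else bwt0.getD ((Z.take k).count false) default
    (b, c, blockIdAt B k))
  let sorted := pairs.mergeSort (fun p q => decide (p.2.1 ≤ q.2.1))
  let Z' := sorted.map (·.1)
  let B' := (List.range B.length).map (fun j =>
    if B.getD j 0 ≠ 0 then B.getD j 0
    else if j < sorted.length ∧
        (j = 0 ∨ (sorted.getD (j - 1) default).2 ≠ (sorted.getD j default).2)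
      then h else 0)
  (Z', B')

/-- State `(Z_h, B)` of the modified H&M / Gap algorithm after iteration `h`:
`Z_0 = 0^{n0} 1^{n1}`, `B` initialized to `1 0^{n0+n1-1} 1`. -/
def gapState [LinearOrder A] [Inhabited A] (bwt0 bwt1 : List A) (n0 n1 : ℕ) :
    ℕ → List Bool × List ℕ
  | 0 => (List.replicate n0 false ++ List.replicate n1 true,
          1 :: (List.replicate (n0 + n1 - 1) 0 ++ [1]))
  | h + 1 => gstep bwt0 bwt1 (h + 1) (gapState bwt0 bwt1 n0 n1 h)

/-- `[ℓ,m]` is a logical `h`-block: a maximal run of suffix-array positions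
whose suffixes share the same length-`h` prefix. -/
def isBlock [LinearOrder A] (t : List A) (sa : ℕ → ℕ) (h : ℕ) (ℓ m : ℕ) : Prop :=
  ℓ ≤ m ∧ m < t.length ∧ lcpArr t sa ℓ < h ∧ lcpArr t sa (m + 1) < h ∧
    ∀ i, ℓ < i → i ≤ m → (h : ℤ) ≤ lcpArr t sa i


section AuxHM

theorem lex_take_le_aux [LinearOrder A] {s t : List A}
    (hlex : List.Lex (· < ·) s t) (h : ℕ) : s.take h ≤ t.take h := by
  induction hlex generalizing h with
  | nil =>
      cases h with
      | zero => simp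
      | succ h => exact le_of_lt List.Lex.nil
  | @cons a l1 l2 _ ih =>
      cases h with
      | zero => simp
      | succ h => simpa using List.cons_le_cons a (ih h)
  | @rel a l1 b l2 hab =>
      cases h with
      | zero => simp
      | succ h => exact le_of_lt (List.Lex.rel hab)

theorem take_le_take_aux [LinearOrder A] {s t : List A} (hst : s ≤ t) (h : ℕ) :
    s.take h ≤ t.take h := by
  rcases eq_or_lt_of_le hst with rfl | hlt
  · exact le_rfl
  · exact lex_take_le_aux hlt h

theorem getD_map_succ_aux (l : List ℕ) (i n : ℕ) :
    (l.map Nat.succ).getD i (n+1) = l.getD i n + 1 := by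
  rw [List.getD_eq_getElem?_getD, List.getD_eq_getElem?_getD, List.getElem?_map]
  cases l[i]? <;> rfl

theorem filter_cons_split_aux (a b : Bool) (Z : List Bool) :
    (List.range (a :: Z).length).filter (fun k => (a :: Z).getD k (!b) == b) =
      (if a == b then [0] else []) ++
        (((List.range Z.length).filter (fun k => Z.getD k (!b) == b)).map Nat.succ) := by
  rw [List.length_cons, List.range_succ_eq_map, List.filter_cons]
  have h2 : ((List.range Z.length).map Nat.succ).filter
      (fun k => (a :: Z).getD k (!b) == b) =
      ((List.range Z.length).filter (fun k => Z.getD k (!b) == b)).map Nat.succ := by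
    rw [List.filter_map]; rfl
  rw [h2]
  by_cases hab : a = b <;> simp [hab]

theorem nthBitPos_cons_pos_aux (a b : Bool) (Z : List Bool) (hab : a = b) (i : ℕ) :
    nthBitPos (a :: Z) b (i + 1) = nthBitPos Z b i + 1 := by
  unfold nthBitPos
  rw [filter_cons_split_aux, List.length_cons, if_pos (by simp [hab])]
  show (0 :: _).getD (i+1) _ = _
  rw [List.getD_cons_succ]
  exact getD_map_succ_aux _ i Z.length

theorem nthBitPos_cons_neg_aux (a b : Bool) (Z : List Bool) (hab : ¬ a = b) (i : ℕ) :
    nthBitPos (a :: Z) b i = nthBitPos Z b i + 1 := by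
  unfold nthBitPos
  rw [filter_cons_split_aux, List.length_cons, if_neg (by simp [hab]), List.nil_append]
  exact getD_map_succ_aux _ i Z.length

theorem nthBitPos_cons_zero_aux (a b : Bool) (Z : List Bool) (hab : a = b) :
    nthBitPos (a :: Z) b 0 = 0 := by
  unfold nthBitPos
  rw [filter_cons_split_aux, List.length_cons, if_pos (by simp [hab])]
  rfl

theorem nthBitPos_count_aux (Z : List Bool) (b : Bool) (p : ℕ) (hp : p < Z.length)
    (hZp : Z.getD p (!b) = b) : nthBitPos Z b ((Z.take p).count b) = p := by
  induction Z generalizing p with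
  | nil => simp at hp
  | cons a Z ih =>
    cases p with
    | zero =>
      simp only [List.getD_cons_zero] at hZp
      simpa using nthBitPos_cons_zero_aux a b Z hZp
    | succ p =>
      simp only [List.getD_cons_succ] at hZp
      have hp' : p < Z.length := by simpa using hp
      have hih := ih p hp' hZp
      rw [List.take_succ_cons]
      by_cases hab : a = b
      · rw [show ((a :: Z.take p).count b) = (Z.take p).count b + 1 from by
          simp [List.count_cons, hab], nthBitPos_cons_pos_aux a b Z hab, hih]
      · rw [show ((a :: Z.take p).count b) = (Z.take p).count b from by
          simp [List.count_cons, hab], nthBitPos_cons_neg_aux a b Z hab, hih]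

theorem count_take_succ_aux (Z : List Bool) (b : Bool) (p : ℕ) (hp : p < Z.length)
    (hZp : Z.getD p (!b) = b) :
    (Z.take (p+1)).count b = (Z.take p).count b + 1 := by
  rw [List.take_succ, List.getElem?_eq_getElem hp]
  have : Z[p] = b := by rw [List.getD_eq_getElem _ _ hp] at hZp; exact hZp
  simp [this]

end AuxHM

/-- a bit vector satisfying the H&M invariant is partitioned into
blocks of equal length-`h` keys: keys are nondecreasing along `Z` (so the
positions sharing a key form consecutive blocks, with the key of any block
smaller than that of later blocks), and within equal keys all bits from `t0`
precede all bits from `t1`. -/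
theorem hm_block_structure [LinearOrder A] [Inhabited A]
    (t0 t1 : List A) (sa0 sa1 : ℕ → ℕ) (h : ℕ) (Z : List Bool)
    (hsent : Sentinels t0 t1)
    (hsa0 : isSuffixArray t0 sa0) (hsa1 : isSuffixArray t1 sa1)
    (hlen : Z.length = t0.length + t1.length)
    (hc0 : Z.count false = t0.length) (hc1 : Z.count true = t1.length)
    (hinv : ∀ i, i < t0.length → ∀ j, j < t1.length →
      (nthBitPos Z false i < nthBitPos Z true j ↔
        (t0.drop (sa0 i)).take h ≤ (t1.drop (sa1 j)).take h)) :
    (∀ p q, p < q → q < Z.length →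
      keyAt t0 t1 sa0 sa1 h Z p ≤ keyAt t0 t1 sa0 sa1 h Z q) ∧
    (∀ p q, p < q → q < Z.length →
      keyAt t0 t1 sa0 sa1 h Z p = keyAt t0 t1 sa0 sa1 h Z q →
      Z.getD p false = true → Z.getD q false = true) := by

  classical
  have hgetD_irrel : ∀ p b, p < Z.length → Z.getD p false = b → Z.getD p (!b) = b := by
    intro p b hp hb
    rw [List.getD_eq_getElem _ _ hp] at hb ⊢
    exact hb
  have hpos : ∀ p b, p < Z.length → Z.getD p false = b →
      nthBitPos Z b ((Z.take p).count b) = p := by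
    intro p b hp hb
    exact nthBitPos_count_aux Z b p hp (hgetD_irrel p b hp hb)
  have hcnt_lt : ∀ p b, p < Z.length → Z.getD p false = b →
      (Z.take p).count b < Z.count b := by
    intro p b hp hb
    have h1 := count_take_succ_aux Z b p hp (hgetD_irrel p b hp hb)
    have h2 : (Z.take (p+1)).count b ≤ Z.count b := (List.take_sublist _ _).count_le _
    omega
  have hcnt_mono : ∀ p q b, p < q → p < Z.length → Z.getD p false = b →
      (Z.take p).count b < (Z.take q).count b := by
    intro p q b hpq hp hb
    have h1 := count_take_succ_aux Z b p hp (hgetD_irrel p b hp hb)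
    have h2 : (Z.take (p+1)).count b ≤ (Z.take q).count b :=
      (List.take_isPrefix_take.mpr (Or.inl hpq)).sublist.count_le _
    omega
  have main : ∀ p q, p < q → q < Z.length →
      keyAt t0 t1 sa0 sa1 h Z p ≤ keyAt t0 t1 sa0 sa1 h Z q ∧
      (Z.getD p false = true → Z.getD q false = false →
        keyAt t0 t1 sa0 sa1 h Z p < keyAt t0 t1 sa0 sa1 h Z q) := by
    intro p q hpq hq
    have hp : p < Z.length := hpq.trans hq
    cases hbp : Z.getD p false <;> cases hbq : Z.getD q false
    · -- false, false
      have hij := hcnt_mono p q false hpq hp hbp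
      have hjlt : (Z.take q).count false < t0.length := by
        have := hcnt_lt q false hq hbq; omega
      have hkey : (t0.drop (sa0 ((Z.take p).count false))).take h ≤
          (t0.drop (sa0 ((Z.take q).count false))).take h :=
        take_le_take_aux (le_of_lt (hsa0.2 _ _ hij hjlt)) h
      refine ⟨?_, ?_⟩
      · simp only [keyAt, hbp, hbq, Bool.false_eq_true, if_false]
        exact hkey
      · intro hT _; exact absurd hT (by simp)
    · -- false, true
      have hilt : (Z.take p).count false < t0.length := by
        have := hcnt_lt p false hp hbp; omega
      have hjlt : (Z.take q).count true < t1.length := by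
        have := hcnt_lt q true hq hbq; omega
      have hkey := (hinv _ hilt _ hjlt).mp
        (by rw [hpos p false hp hbp, hpos q true hq hbq]; exact hpq)
      refine ⟨?_, ?_⟩
      · simp only [keyAt, hbp, hbq, Bool.false_eq_true, if_false, if_true]
        exact hkey
      · intro hT _; exact absurd hT (by simp)
    · -- true, false
      have hilt : (Z.take p).count true < t1.length := by
        have := hcnt_lt p true hp hbp; omega
      have hjlt : (Z.take q).count false < t0.length := by
        have := hcnt_lt q false hq hbq; omega
      have hnot : ¬ ((t0.drop (sa0 ((Z.take q).count false))).take h ≤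
          (t1.drop (sa1 ((Z.take p).count true))).take h) := by
        intro hle
        have hlt := (hinv _ hjlt _ hilt).mpr hle
        rw [hpos q false hq hbq, hpos p true hp hbp] at hlt
        omega
      have hkey := lt_of_not_ge hnot
      refine ⟨?_, ?_⟩
      · simp only [keyAt, hbp, hbq, Bool.false_eq_true, if_false, if_true]
        exact le_of_lt hkey
      · intro _ _
        simp only [keyAt, hbp, hbq, Bool.false_eq_true, if_false, if_true]
        exact hkey
    · -- true, true
      have hij := hcnt_mono p q true hpq hp hbp
      have hjlt : (Z.take q).count true < t1.length := by
        have := hcnt_lt q true hq hbq; omega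
      have hkey : (t1.drop (sa1 ((Z.take p).count true))).take h ≤
          (t1.drop (sa1 ((Z.take q).count true))).take h :=
        take_le_take_aux (le_of_lt (hsa1.2 _ _ hij hjlt)) h
      refine ⟨?_, ?_⟩
      · simp only [keyAt, hbp, hbq, if_true]
        exact hkey
      · intro _ hF; exact absurd hF (by simp)
  refine ⟨fun p q hpq hq => (main p q hpq hq).1, fun p q hpq hq heq hT => ?_⟩
  cases hbq : Z.getD q false
  · exact absurd heq (ne_of_lt ((main p q hpq hq).2 hT hbq))
  · rfl
end

section
/- In the modified H&M algorithm maintaining the marker array B, for every h ≥ 0 and every maximal interval [ℓ,m] such that lcp01[ℓ] < h, min(lcp01[ℓ+1],…,lcp01[m]) ≥ h, and lcp01[m+1] < h, at the end of iteration h the array B satisfies B[ℓ] ≠ 0, B[ℓ+1] = ⋯ = B[m] = 0, and B[m+1] ≠ 0, and Z_h[ℓ,m] is one of the logical blocks of Z_h. -/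
open List Finset

variable {A : Type*}

/-! ### Auxiliary lemmas: lexicographic order and longest common prefixes -/

section LexLcp
variable {A : Type*}

lemma HM.lcpLen_nil_left [DecidableEq A] (v : List A) : lcpLen [] v = 0 := by
  cases v <;> rfl

lemma HM.lcpLen_nil_right [DecidableEq A] (u : List A) : lcpLen u [] = 0 := by
  cases u <;> rfl

lemma HM.lcpLen_cons [DecidableEq A] (a b : A) (u v : List A) :
    lcpLen (a::u) (b::v) = if a = b then lcpLen u v + 1 else 0 := rfl

lemma HM.lcpLen_le_left [DecidableEq A] : ∀ (u v : List A), lcpLen u v ≤ u.length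
  | [], v => by simp [HM.lcpLen_nil_left]
  | a::u, [] => by simp [HM.lcpLen_nil_right]
  | a::u, b::v => by
      by_cases h : a = b <;> simp [HM.lcpLen_cons, h]
      have := HM.lcpLen_le_left u v; omega

lemma HM.lcpLen_comm [DecidableEq A] : ∀ (u v : List A), lcpLen u v = lcpLen v u
  | [], v => by simp [HM.lcpLen_nil_left, HM.lcpLen_nil_right]
  | a::u, [] => by simp [HM.lcpLen_nil_left, HM.lcpLen_nil_right]
  | a::u, b::v => by
      by_cases h : a = b
      · subst h; simp [HM.lcpLen_cons, HM.lcpLen_comm u v]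
      · simp [HM.lcpLen_cons, h, Ne.symm h]

lemma HM.lcpLen_le_right [DecidableEq A] (u v : List A) : lcpLen u v ≤ v.length := by
  rw [HM.lcpLen_comm]; exact HM.lcpLen_le_left v u

lemma HM.take_eq_of_le_lcpLen [DecidableEq A] :
    ∀ (h : ℕ) (u v : List A), h ≤ lcpLen u v → u.take h = v.take h
  | 0, u, v, _ => by simp
  | h+1, [], v, hh => by simp [HM.lcpLen_nil_left] at hh
  | h+1, a::u, [], hh => by simp [HM.lcpLen_nil_right] at hh
  | h+1, a::u, b::v, hh => by
      by_cases hab : a = b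
      · subst hab
        simp only [HM.lcpLen_cons, eq_self_iff_true, if_true] at hh
        simp only [List.take_succ_cons]
        rw [HM.take_eq_of_le_lcpLen h u v (by omega)]
      · simp [HM.lcpLen_cons, hab] at hh

lemma HM.lcpLen_take [DecidableEq A] :
    ∀ (p q : ℕ) (u v : List A), lcpLen (u.take p) (v.take q) = min p (min q (lcpLen u v))
  | 0, q, u, v => by simp [HM.lcpLen_nil_left]
  | p+1, 0, u, v => by simp [HM.lcpLen_nil_right]
  | p+1, q+1, [], v => by simp [HM.lcpLen_nil_left]
  | p+1, q+1, a::u, [] => by simp [HM.lcpLen_nil_right]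
  | p+1, q+1, a::u, b::v => by
      by_cases hab : a = b
      · subst hab
        simp only [List.take_succ_cons, HM.lcpLen_cons, eq_self_iff_true, if_true]
        rw [HM.lcpLen_take p q u v]; omega
      · simp [List.take_succ_cons, HM.lcpLen_cons, hab]

end LexLcp

section Lex
variable {A : Type*} [LinearOrder A]

lemma HM.cons_lt_iff {a b : A} {u v : List A} :
    (a::u) < (b::v) ↔ a < b ∨ (a = b ∧ u < v) := by
  constructor
  · intro h
    cases h with
    | cons h' => exact Or.inr ⟨rfl, h'⟩
    | rel h' => exact Or.inl h'
  · rintro (h | ⟨rfl, h⟩)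
    · exact List.Lex.rel h
    · exact List.Lex.cons h

lemma HM.not_lt_nil (u : List A) : ¬ u < [] := by intro h; cases h

lemma HM.le_nil_iff {u : List A} : u ≤ [] ↔ u = [] := by
  constructor
  · intro h
    cases u with
    | nil => rfl
    | cons a u => exact absurd (List.nil_lt_cons a u) (not_lt.mpr h)
  · rintro rfl; exact le_refl _

lemma HM.cons_le_iff {a b : A} {u v : List A} :
    (a::u) ≤ (b::v) ↔ a < b ∨ (a = b ∧ u ≤ v) := by
  rw [← not_lt, ← not_lt]
  rw [show ((b::v) < (a::u) ↔ b < a ∨ (b = a ∧ v < u)) from HM.cons_lt_iff]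
  rcases lt_trichotomy a b with h | h | h
  · simp [h, not_lt.mpr h.le, ne_of_gt h, h.ne]
  · subst h; simp
  · simp [h, not_lt.mpr h.le, ne_of_gt h, (ne_of_gt h).symm, not_lt.mpr h.le, h.not_gt]

lemma HM.prefix_le : ∀ {u v : List A}, u <+: v → u ≤ v
  | [], v, _ => by
      cases v with
      | nil => exact le_refl _
      | cons a v => exact le_of_lt (List.nil_lt_cons a v)
  | a::u, v, hp => by
      rcases hp with ⟨t, rfl⟩
      rw [List.cons_append]
      exact HM.cons_le_iff.mpr (Or.inr ⟨rfl, HM.prefix_le ⟨t, rfl⟩⟩)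

lemma HM.take_le_take : ∀ (h : ℕ) {u v : List A}, u ≤ v → u.take h ≤ v.take h
  | 0, u, v, _ => by simp
  | h+1, [], v, _ => HM.prefix_le List.nil_prefix
  | h+1, a::u, [], hle => by rw [HM.le_nil_iff.mp hle]
  | h+1, a::u, b::v, hle => by
      rcases HM.cons_le_iff.mp hle with h' | ⟨rfl, h'⟩
      · simp only [List.take_succ_cons]
        exact HM.cons_le_iff.mpr (Or.inl h')
      · simp only [List.take_succ_cons]
        exact HM.cons_le_iff.mpr (Or.inr ⟨rfl, HM.take_le_take h h'⟩)

lemma HM.min_lcp_le : ∀ {u v w : List A}, u ≤ v → v ≤ w →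
    min (lcpLen u v) (lcpLen v w) ≤ lcpLen u w
  | [], v, w, _, _ => by simp [HM.lcpLen_nil_left]
  | a::u, [], w, huv, _ => by
      rw [HM.le_nil_iff.mp huv] at *; simp [HM.lcpLen_nil_left]
  | a::u, b::v, [], _, hvw => by simp [HM.le_nil_iff.mp hvw, HM.lcpLen_nil_right]
  | a::u, b::v, c::w, huv, hvw => by
      by_cases hab : a = b
      · by_cases hbc : b = c
        · subst hab; subst hbc
          have h1 : u ≤ v := by
            rcases HM.cons_le_iff.mp huv with h | ⟨_, h⟩
            · exact absurd h (lt_irrefl a)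
            · exact h
          have h2 : v ≤ w := by
            rcases HM.cons_le_iff.mp hvw with h | ⟨_, h⟩
            · exact absurd h (lt_irrefl a)
            · exact h
          simp only [HM.lcpLen_cons, eq_self_iff_true, if_true]
          have := HM.min_lcp_le h1 h2; omega
        · simp [HM.lcpLen_cons, hbc]
      · simp [HM.lcpLen_cons, hab]

lemma HM.lcpLen_le_middle_left : ∀ {u v w : List A}, u ≤ v → v ≤ w →
    lcpLen u w ≤ lcpLen u v
  | [], v, w, _, _ => by simp [HM.lcpLen_nil_left]
  | a::u, v, [], _, _ => by simp [HM.lcpLen_nil_right]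
  | a::u, [], c::w, huv, hvw => absurd (HM.le_nil_iff.mp huv) (List.cons_ne_nil a u)
  | a::u, b::v, c::w, huv, hvw => by
      by_cases hac : a = c
      · subst hac
        have hab : a = b := by
          rcases HM.cons_le_iff.mp huv with h | ⟨h, _⟩
          · rcases HM.cons_le_iff.mp hvw with h' | ⟨h', _⟩
            · exact absurd (h.trans h') (lt_irrefl a)
            · exact absurd (h'.symm ▸ h : a < a) (lt_irrefl a)
          · exact h
        subst hab
        have h1 : u ≤ v := by
          rcases HM.cons_le_iff.mp huv with h | ⟨_, h⟩
          · exact absurd h (lt_irrefl a)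
          · exact h
        have h2 : v ≤ w := by
          rcases HM.cons_le_iff.mp hvw with h | ⟨_, h⟩
          · exact absurd h (lt_irrefl a)
          · exact h
        simp only [HM.lcpLen_cons, eq_self_iff_true, if_true]
        have := HM.lcpLen_le_middle_left h1 h2; omega
      · simp [HM.lcpLen_cons, hac]

lemma HM.lcpLen_le_middle_right : ∀ {u v w : List A}, u ≤ v → v ≤ w →
    lcpLen u w ≤ lcpLen v w
  | [], v, w, _, _ => by simp [HM.lcpLen_nil_left]
  | a::u, v, [], _, _ => by simp [HM.lcpLen_nil_right]
  | a::u, [], c::w, huv, hvw => absurd (HM.le_nil_iff.mp huv) (List.cons_ne_nil a u)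
  | a::u, b::v, c::w, huv, hvw => by
      by_cases hac : a = c
      · subst hac
        have hab : a = b := by
          rcases HM.cons_le_iff.mp huv with h | ⟨h, _⟩
          · rcases HM.cons_le_iff.mp hvw with h' | ⟨h', _⟩
            · exact absurd (h.trans h') (lt_irrefl a)
            · exact absurd (h'.symm ▸ h : a < a) (lt_irrefl a)
          · exact h
        subst hab
        have h1 : u ≤ v := by
          rcases HM.cons_le_iff.mp huv with h | ⟨_, h⟩
          · exact absurd h (lt_irrefl a)
          · exact h
        have h2 : v ≤ w := by
          rcases HM.cons_le_iff.mp hvw with h | ⟨_, h⟩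
          · exact absurd h (lt_irrefl a)
          · exact h
        simp only [HM.lcpLen_cons, eq_self_iff_true, if_true]
        have := HM.lcpLen_le_middle_right h1 h2; omega
      · simp [HM.lcpLen_cons, hac]

lemma HM.lt_iff_lcp [Inhabited A] : ∀ (u v : List A), u < v ↔
    ((lcpLen u v = u.length ∧ u.length < v.length) ∨
      (lcpLen u v < u.length ∧ lcpLen u v < v.length ∧
        u.getD (lcpLen u v) default < v.getD (lcpLen u v) default))
  | [], [] => by simp [HM.lcpLen_nil_left, lt_irrefl]
  | [], b::v => by simp [HM.lcpLen_nil_left, List.nil_lt_cons]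
  | a::u, [] => by simp [HM.lcpLen_nil_right, HM.not_lt_nil]
  | a::u, b::v => by
      rw [HM.cons_lt_iff]
      by_cases hab : a = b
      · subst hab
        simp only [HM.lcpLen_cons, eq_self_iff_true, if_true, true_and, lt_irrefl, false_or,
          List.length_cons, List.getD_cons_succ]
        rw [HM.lt_iff_lcp u v]
        constructor
        · rintro (⟨h1, h2⟩ | ⟨h1, h2, h3⟩)
          · exact Or.inl ⟨by omega, by omega⟩
          · exact Or.inr ⟨by omega, by omega, h3⟩
        · rintro (⟨h1, h2⟩ | ⟨h1, h2, h3⟩)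
          · exact Or.inl ⟨by omega, by omega⟩
          · exact Or.inr ⟨by omega, by omega, h3⟩
      · simp only [HM.lcpLen_cons, if_neg hab, List.getD_cons_zero, List.length_cons]
        constructor
        · rintro (h | ⟨rfl, _⟩)
          · exact Or.inr ⟨by omega, by omega, h⟩
          · exact absurd rfl hab
        · rintro (⟨h, _⟩ | ⟨_, _, h⟩)
          · omega
          · exact Or.inl h
end Lex

/-! ### Generic helper lemmas -/

section Helpers
variable {X : Type*}

lemma HM.map_getD_range (l : List X) (d : X) :
    (List.range l.length).map (fun k => l.getD k d) = l := by
  apply List.ext_getElem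
  · simp
  · intro i h1 h2
    have hi : i < l.length := by simpa using h1
    simp [List.getD_eq_getElem l d hi, List.getElem?_eq_getElem hi]

lemma HM.getD_map_range (m : ℕ) (f : ℕ → X) (j : ℕ) (d : X) :
    (((List.range m).map f).getD j d) = if j < m then f j else d := by
  split
  · next h => rw [List.getD_eq_getElem _ _ (by simpa using h)]; simp
  · next h => exact List.getD_eq_default _ _ (by simpa using Nat.le_of_not_lt h)

lemma HM.count_bool (l : List Bool) : l.count true + l.count false = l.length := by
  induction l with
  | nil => simp
  | cons a l ih => cases a <;> simp [List.count_cons] <;> omega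

lemma HM.count_take_mono (l : List Bool) (b : Bool) {k k' : ℕ} (h : k ≤ k') :
    (l.take k).count b ≤ (l.take k').count b := by
  have heq : l.take k = (l.take k').take k := by rw [List.take_take, min_eq_left h]
  rw [heq]
  exact (List.take_sublist _ _).count_le _

lemma HM.count_take_succ {l : List Bool} {k : ℕ} {b : Bool} (hk : k < l.length)
    (hb : l.getD k false = b) :
    (l.take (k+1)).count b = (l.take k).count b + 1 := by
  rw [List.take_succ, List.getElem?_eq_getElem hk, ← List.getD_eq_getElem l false hk, hb]
  simp [List.count_append]

lemma HM.count_take_lt_take {l : List Bool} {k k' : ℕ} {b : Bool} (hkk : k < k')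
    (hk : k < l.length) (hb : l.getD k false = b) :
    (l.take k).count b < (l.take k').count b := by
  have h1 := HM.count_take_succ hk hb
  have h2 := HM.count_take_mono l b (show k + 1 ≤ k' by omega)
  omega

lemma HM.count_take_lt {l : List Bool} {k : ℕ} {b : Bool} (hk : k < l.length)
    (hb : l.getD k false = b) : (l.take k).count b < l.count b := by
  have h1 := HM.count_take_succ hk hb
  have h2 := HM.count_take_mono l b (show k + 1 ≤ l.length by omega)
  rw [List.take_length] at h2
  omega

lemma HM.filter_getD_count (pred : X → Bool) (d : X) :
    ∀ (l : List X) (p : ℕ), p < l.length → pred (l.getD p d) = true →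
      (l.filter pred).getD ((l.take p).countP pred) d = l.getD p d
  | [], p, hp, _ => by simp at hp
  | x::xs, 0, _, hx => by
      simp only [List.getD_cons_zero] at hx ⊢
      simp [List.filter_cons, hx]
  | x::xs, p+1, hp, hx => by
      simp only [List.getD_cons_succ] at hx ⊢
      have ih := HM.filter_getD_count pred d xs p (by simpa using hp) hx
      by_cases hpx : pred x = true
      · rw [List.take_succ_cons, List.countP_cons, List.filter_cons, if_pos hpx]
        simp only [hpx, if_true]
        rw [show (List.countP pred (xs.take p) + 1) = (List.countP pred (xs.take p)) + 1 from rfl]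
        rw [List.getD_cons_succ]
        exact ih
      · rw [List.take_succ_cons, List.countP_cons, List.filter_cons, if_neg hpx]
        simp only [hpx, if_false]
        simpa using ih

lemma HM.pairwise_of_filter {A' : Type*} [LinearOrder A'] (cf : X → A') (S : X → X → Prop) :
    ∀ (l : List X), l.Pairwise (fun e e' => cf e ≤ cf e') →
      (∀ v : A', (l.filter (fun e => cf e == v)).Pairwise S) →
      l.Pairwise (fun e e' => cf e < cf e' ∨ (cf e = cf e' ∧ S e e'))
  | [], _, _ => List.Pairwise.nil
  | x::xs, hle, hf => by
      rcases List.pairwise_cons.mp hle with ⟨hx, hxs⟩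
      refine List.pairwise_cons.mpr ⟨?_, ?_⟩
      · intro e he
        rcases lt_or_eq_of_le (hx e he) with h | h
        · exact Or.inl h
        · refine Or.inr ⟨h, ?_⟩
          have h0 := hf (cf x)
          rw [List.filter_cons, if_pos (by simp)] at h0
          exact (List.pairwise_cons.mp h0).1 e (List.mem_filter.mpr ⟨he, by simp [h]⟩)
      · apply HM.pairwise_of_filter cf S xs hxs
        intro v
        have h0 := hf v
        rw [List.filter_cons] at h0
        split at h0
        · exact (List.pairwise_cons.mp h0).2
        · exact h0

lemma HM.le_foldr_max {x : ℕ} : ∀ {l : List ℕ}, x ∈ l → x ≤ l.foldr max 0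
  | a::l, h => by
      rcases List.mem_cons.mp h with rfl | h
      · exact le_max_left _ _
      · exact le_trans (HM.le_foldr_max h) (le_max_right _ _)

lemma HM.foldr_max_le {m : ℕ} : ∀ {l : List ℕ}, (∀ x ∈ l, x ≤ m) → l.foldr max 0 ≤ m
  | [], _ => Nat.zero_le m
  | a::l, h => by
      simp only [List.foldr_cons]
      exact max_le (h a (List.mem_cons_self))
        (HM.foldr_max_le fun x hx => h x (List.mem_cons_of_mem a hx))

lemma HM.foldr_max_mem : ∀ (l : List ℕ), l.foldr max 0 ∈ l ∨ l.foldr max 0 = 0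
  | [] => Or.inr rfl
  | a::l => by
      simp only [List.foldr_cons]
      rcases le_total a (l.foldr max 0) with h | h
      · rw [max_eq_right h]
        rcases HM.foldr_max_mem l with h' | h'
        · exact Or.inl (List.mem_cons_of_mem a h')
        · exact Or.inr h'
      · rw [max_eq_left h]; exact Or.inl (List.mem_cons_self)

end Helpers

section BlockId

lemma HM.blockIdAt_le (B : List ℕ) (k : ℕ) : blockIdAt B k ≤ k := by
  apply HM.foldr_max_le
  intro x hx
  have := List.mem_range.mp (List.mem_of_mem_filter hx)
  omega

lemma HM.blockIdAt_mono (B : List ℕ) {k k' : ℕ} (h : k ≤ k') :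
    blockIdAt B k ≤ blockIdAt B k' := by
  apply HM.foldr_max_le
  intro x hx
  apply HM.le_foldr_max
  rcases List.mem_filter.mp hx with ⟨hx1, hx2⟩
  exact List.mem_filter.mpr ⟨List.mem_range.mpr (by have := List.mem_range.mp hx1; omega), hx2⟩

lemma HM.le_blockIdAt {B : List ℕ} {j k : ℕ} (hj : j ≤ k) (hB : B.getD j 0 ≠ 0) :
    j ≤ blockIdAt B k := by
  apply HM.le_foldr_max
  exact List.mem_filter.mpr ⟨List.mem_range.mpr (by omega), by simpa using hB⟩

lemma HM.blockIdAt_ne_zero {B : List ℕ} (hB0 : B.getD 0 0 ≠ 0) (k : ℕ) :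
    B.getD (blockIdAt B k) 0 ≠ 0 := by
  rcases HM.foldr_max_mem ((List.range (k+1)).filter (fun j => !(B.getD j 0 == 0))) with h | h
  · have := (List.mem_filter.mp h).2
    rw [show blockIdAt B k = ((List.range (k+1)).filter (fun j => !(B.getD j 0 == 0))).foldr max 0
      from rfl]
    simpa using this
  · rw [show blockIdAt B k = ((List.range (k+1)).filter (fun j => !(B.getD j 0 == 0))).foldr max 0
      from rfl, h]
    exact hB0

end BlockId

/-! ### getD helpers -/

section GetD
variable {X : Type*}

lemma HM.getD_take' (l : List X) {m k : ℕ} (d : X) (hk : k < m) :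
    (l.take m).getD k d = l.getD k d := by
  by_cases hkl : k < l.length
  · rw [List.getD_eq_getElem _ _ (by simp; omega), List.getD_eq_getElem _ _ hkl,
      List.getElem_take]
  · rw [List.getD_eq_default _ _ (by simp; omega), List.getD_eq_default _ _ (by omega)]

lemma HM.getD_drop' (l : List X) {i k : ℕ} (d : X) (hk : k < l.length - i) :
    (l.drop i).getD k d = l.getD (i+k) d := by
  rw [List.getD_eq_getElem _ _ (by simp; omega), List.getD_eq_getElem _ _ (by omega)]
  exact List.getElem_drop

lemma HM.getD_prefix {u w : List X} (hp : u <+: w) {k : ℕ} (d : X) (hk : k < u.length) :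
    u.getD k d = w.getD k d := by
  conv_lhs => rw [List.prefix_iff_eq_take.mp hp]
  exact HM.getD_take' w d hk

lemma HM.getLast!_eq_getD [Inhabited X] {l : List X} (h : l ≠ []) :
    l.getLast! = l.getD (l.length - 1) default := by
  have hl : 0 < l.length := List.length_pos_iff.mpr h
  rw [List.getD_eq_getElem _ _ (by omega)]
  apply List.getLast!_of_getLast?
  rw [List.getLast?_eq_getElem?, List.getElem?_eq_getElem (by omega)]

lemma HM.two_le_count [DecidableEq X] [Inhabited X] {l : List X} {a : X} {i j : ℕ}
    (hij : i < j) (hj : j < l.length)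
    (hi' : l.getD i default = a) (hj' : l.getD j default = a) : 2 ≤ l.count a := by
  have hi : i < l.length := by omega
  have h1 : a ∈ l.take (i+1) := by
    rw [← hi']
    rw [List.getD_eq_getElem _ _ hi]
    have : i < (l.take (i+1)).length := by simp; omega
    rw [show l[i] = (l.take (i+1))[i] from List.getElem_take.symm]
    exact List.getElem_mem this
  have h2 : a ∈ l.drop (i+1) := by
    rw [← hj']
    have hb : j - (i+1) < (l.drop (i+1)).length := by simp; omega
    rw [List.getD_eq_getElem _ _ hj]
    have : l[j] = (l.drop (i+1))[j - (i+1)] := by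
      rw [List.getElem_drop]; congr 1; omega
    rw [this]
    exact List.getElem_mem hb
  have hc : l.count a = (l.take (i+1)).count a + (l.drop (i+1)).count a := by
    conv_lhs => rw [← List.take_append_drop (i+1) l]
    exact List.count_append
  have c1 : 0 < (l.take (i+1)).count a := List.count_pos_iff.mpr h1
  have c2 : 0 < (l.drop (i+1)).count a := List.count_pos_iff.mpr h2
  omega

end GetD

/-! ### native suffixes, keys, sources -/

def HM.nsuf {A : Type*} (t0 t1 : List A) (i : ℕ) : List A :=
  if i < t0.length then t0.drop i else t1.drop (i - t0.length)

def HM.gkey {A : Type*} (t0 t1 : List A) (h i : ℕ) : List A := (HM.nsuf t0 t1 i).take h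

def HM.srcOf (t0len : ℕ) (sa0 sa1 : ℕ → ℕ) (Z : List Bool) (p : ℕ) : ℕ :=
  if Z.getD p false then t0len + sa1 ((Z.take p).count true) else sa0 ((Z.take p).count false)

def HM.pidx (n0 n1 : ℕ) (i : ℕ) : ℕ :=
  if i < n0 then (if i = 0 then n0 - 1 else i - 1)
  else (if i = n0 then n0 + n1 - 1 else i - 1)

section Sentinel
variable {A : Type*} [LinearOrder A] [Inhabited A]
variable {t0 t1 : List A} {sa0 sa1 sa01 : ℕ → ℕ}

lemma HM.n0_pos (hsent : Sentinels t0 t1) : 0 < t0.length := List.length_pos_iff.mpr hsent.1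
lemma HM.n1_pos (hsent : Sentinels t0 t1) : 0 < t1.length := List.length_pos_iff.mpr hsent.2.1

lemma HM.sent_pos0 (hsent : Sentinels t0 t1) :
    (t0++t1).getD (t0.length - 1) default = t0.getLast! := by
  rw [List.getD_append _ _ _ _ (by have := HM.n0_pos hsent; omega)]
  exact (HM.getLast!_eq_getD hsent.1).symm

lemma HM.sent_pos1 (hsent : Sentinels t0 t1) :
    (t0++t1).getD (t0.length + t1.length - 1) default = t1.getLast! := by
  have h1 := HM.n1_pos hsent
  rw [List.getD_append_right _ _ _ _ (by omega)]
  rw [show t0.length + t1.length - 1 - t0.length = t1.length - 1 by omega]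
  exact (HM.getLast!_eq_getD hsent.2.1).symm

lemma HM.sent_unique0 (hsent : Sentinels t0 t1) {i : ℕ} (hi : i < t0.length + t1.length)
    (h : (t0++t1).getD i default = t0.getLast!) : i = t0.length - 1 := by
  have hn0 := HM.n0_pos hsent
  have hcnt := hsent.2.2.2.2.2.1
  have hpos := HM.sent_pos0 hsent
  by_contra hne
  have hlen : (t0++t1).length = t0.length + t1.length := by simp
  rcases lt_or_gt_of_ne hne with hlt | hgt
  · have := HM.two_le_count hlt (by omega) h hpos; omega
  · have := HM.two_le_count hgt (by omega) hpos h; omega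

lemma HM.sent_unique1 (hsent : Sentinels t0 t1) {i : ℕ} (hi : i < t0.length + t1.length)
    (h : (t0++t1).getD i default = t1.getLast!) : i = t0.length + t1.length - 1 := by
  have hn1 := HM.n1_pos hsent
  have hcnt := hsent.2.2.2.2.2.2
  have hpos := HM.sent_pos1 hsent
  by_contra hne
  have hlen : (t0++t1).length = t0.length + t1.length := by simp
  rcases lt_or_gt_of_ne hne with hlt | hgt
  · have := HM.two_le_count hlt (by omega) h hpos; omega
  · have := HM.two_le_count hgt (by omega) hpos h; omega

lemma HM.drop_append_left {i : ℕ} (hi : i ≤ t0.length) :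
    (t0++t1).drop i = t0.drop i ++ t1 := by
  rw [List.drop_append, show i - t0.length = 0 by omega, List.drop_zero]

lemma HM.drop_append_right {i : ℕ} (hi : t0.length ≤ i) :
    (t0++t1).drop i = t1.drop (i - t0.length) := by
  rw [List.drop_append, List.drop_eq_nil_of_le hi, List.nil_append]

lemma HM.nsuf_prefix (i : ℕ) : HM.nsuf t0 t1 i <+: (t0++t1).drop i := by
  unfold HM.nsuf
  split
  · next h => rw [HM.drop_append_left (le_of_lt h)]; exact List.prefix_append _ _
  · next h => rw [HM.drop_append_right (le_of_not_gt h)]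

lemma HM.nsuf_length {i : ℕ} :
    (HM.nsuf t0 t1 i).length =
      if i < t0.length then t0.length - i else t1.length - (i - t0.length) := by
  unfold HM.nsuf; split <;> simp

lemma HM.nsuf_len_pos {i : ℕ} (hi : i < t0.length + t1.length) :
    0 < (HM.nsuf t0 t1 i).length := by
  rw [HM.nsuf_length]; split <;> omega

lemma HM.nsuf_last (hsent : Sentinels t0 t1) {i : ℕ} (hi : i < t0.length + t1.length) :
    (HM.nsuf t0 t1 i).getD ((HM.nsuf t0 t1 i).length - 1) default =
      (if i < t0.length then t0.getLast! else t1.getLast!) := by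
  unfold HM.nsuf
  split
  · next h =>
    simp only [List.length_drop]
    rw [HM.getD_drop' t0 default (by omega)]
    rw [show i + (t0.length - i - 1) = t0.length - 1 by omega]
    exact (HM.getLast!_eq_getD hsent.1).symm
  · next h =>
    simp only [List.length_drop]
    rw [HM.getD_drop' t1 default (by omega)]
    rw [show (i - t0.length) + (t1.length - (i - t0.length) - 1) = t1.length - 1 by omega]
    exact (HM.getLast!_eq_getD hsent.2.1).symm

/-- canonical position of the last character of the native suffix at `i` -/
lemma HM.nsuf_last_pos {i : ℕ} (hi : i < t0.length + t1.length) :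
    i + ((HM.nsuf t0 t1 i).length - 1) =
      (if i < t0.length then t0.length - 1 else t0.length + t1.length - 1) := by
  rw [HM.nsuf_length]; split <;> omega

/-- K0: the lcp of two distinct suffixes of `t0 ++ t1` is shorter than the native suffixes. -/
lemma HM.lcp_lt_nsuf (hsent : Sentinels t0 t1) {i j : ℕ}
    (hi : i < t0.length + t1.length) (hj : j < t0.length + t1.length) (hij : i ≠ j) :
    lcpLen ((t0++t1).drop i) ((t0++t1).drop j) < (HM.nsuf t0 t1 j).length := by
  set d := lcpLen ((t0++t1).drop i) ((t0++t1).drop j) with hd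
  by_contra hcon
  push_neg at hcon
  set Lj := (HM.nsuf t0 t1 j).length with hLj
  have hLjpos : 0 < Lj := HM.nsuf_len_pos hj
  have hlen : (t0++t1).length = t0.length + t1.length := by simp
  have hjlen : Lj ≤ ((t0++t1).drop j).length :=
    (HM.nsuf_prefix j).length_le
  have hUlen : ((t0++t1).drop i).length = t0.length + t1.length - i := by simp
  have hdU : d ≤ t0.length + t1.length - i := by
    rw [← hUlen]; exact HM.lcpLen_le_left _ _
  -- value at position Lj - 1 in both suffixes
  have hV : ((t0++t1).drop j).getD (Lj - 1) default =
      (if j < t0.length then t0.getLast! else t1.getLast!) := by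
    rw [← HM.getD_prefix (HM.nsuf_prefix j) default (by omega)]
    exact HM.nsuf_last hsent hj
  have htake := HM.take_eq_of_le_lcpLen Lj _ _ (by rw [← hd]; exact hcon)
  have hU : ((t0++t1).drop i).getD (Lj - 1) default =
      ((t0++t1).drop j).getD (Lj - 1) default := by
    rw [← HM.getD_take' ((t0++t1).drop i) default (show Lj - 1 < Lj by omega),
      ← HM.getD_take' ((t0++t1).drop j) default (show Lj - 1 < Lj by omega), htake]
  have hiU : (t0++t1).getD (i + (Lj - 1)) default =
      (if j < t0.length then t0.getLast! else t1.getLast!) := by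
    rw [← HM.getD_drop' (t0++t1) default (by omega)]
    rw [hU]; exact hV
  have hjpos : j + (Lj - 1) = (if j < t0.length then t0.length - 1
      else t0.length + t1.length - 1) := HM.nsuf_last_pos hj
  have hieq : i + (Lj - 1) = j + (Lj - 1) := by
    split at hiU
    · next hcase =>
      have := HM.sent_unique0 hsent (by omega) hiU
      rw [hjpos, if_pos hcase]; omega
    · next hcase =>
      have := HM.sent_unique1 hsent (by omega) hiU
      rw [hjpos, if_neg hcase]; omega
  exact hij (by omega)

lemma HM.gkey_eq_drop_take {h i : ℕ} (hh : h ≤ (HM.nsuf t0 t1 i).length) :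
    HM.gkey t0 t1 h i = ((t0++t1).drop i).take h := by
  unfold HM.gkey
  rw [List.prefix_iff_eq_take.mp (HM.nsuf_prefix i), List.take_take,
    min_eq_left hh]

/-- P5: if the lcp of the two full suffixes is at least `h`, the `h`-keys agree. -/
lemma HM.keyEq (hsent : Sentinels t0 t1) {h i j : ℕ}
    (hi : i < t0.length + t1.length) (hj : j < t0.length + t1.length)
    (hd : h ≤ lcpLen ((t0++t1).drop i) ((t0++t1).drop j)) :
    HM.gkey t0 t1 h i = HM.gkey t0 t1 h j := by
  rcases eq_or_ne i j with rfl | hij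
  · rfl
  have K0j := HM.lcp_lt_nsuf hsent hi hj hij
  have K0i := HM.lcp_lt_nsuf hsent hj hi hij.symm
  rw [HM.lcpLen_comm] at K0i
  rw [HM.gkey_eq_drop_take (by omega), HM.gkey_eq_drop_take (by omega)]
  exact HM.take_eq_of_le_lcpLen h _ _ hd

/-- P6: if the lcp is `< h` and suffix `i` is smaller, the `h`-key of `i` is smaller. -/
lemma HM.keyLt (hsent : Sentinels t0 t1) {h i j : ℕ}
    (hi : i < t0.length + t1.length) (hj : j < t0.length + t1.length) (hij : i ≠ j)
    (hd : lcpLen ((t0++t1).drop i) ((t0++t1).drop j) < h)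
    (hlt : (t0++t1).drop i < (t0++t1).drop j) :
    HM.gkey t0 t1 h i < HM.gkey t0 t1 h j := by
  have K0j := HM.lcp_lt_nsuf hsent hi hj hij
  have K0i : lcpLen ((t0++t1).drop i) ((t0++t1).drop j) < (HM.nsuf t0 t1 i).length := by
    rw [HM.lcpLen_comm]; exact HM.lcp_lt_nsuf hsent hj hi hij.symm
  have hLiU : (HM.nsuf t0 t1 i).length ≤ ((t0++t1).drop i).length :=
    (HM.nsuf_prefix i).length_le
  have hLjV : (HM.nsuf t0 t1 j).length ≤ ((t0++t1).drop j).length :=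
    (HM.nsuf_prefix j).length_le
  have hx : HM.gkey t0 t1 h i =
      ((t0++t1).drop i).take (min h (HM.nsuf t0 t1 i).length) := by
    unfold HM.gkey
    conv_lhs => rw [List.prefix_iff_eq_take.mp (HM.nsuf_prefix i)]
    rw [List.take_take]
  have hy : HM.gkey t0 t1 h j =
      ((t0++t1).drop j).take (min h (HM.nsuf t0 t1 j).length) := by
    unfold HM.gkey
    conv_lhs => rw [List.prefix_iff_eq_take.mp (HM.nsuf_prefix j)]
    rw [List.take_take]
  have hUV := (HM.lt_iff_lcp ((t0++t1).drop i) ((t0++t1).drop j)).mp hlt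
  have hgetlt : ((t0++t1).drop i).getD
        (lcpLen ((t0++t1).drop i) ((t0++t1).drop j)) default <
      ((t0++t1).drop j).getD (lcpLen ((t0++t1).drop i) ((t0++t1).drop j)) default := by
    rcases hUV with ⟨h1, _⟩ | ⟨_, _, h3⟩
    · omega
    · exact h3
  rw [hx, hy, HM.lt_iff_lcp, HM.lcpLen_take]
  rw [show min (min h (HM.nsuf t0 t1 i).length)
      (min (min h (HM.nsuf t0 t1 j).length)
        (lcpLen ((t0++t1).drop i) ((t0++t1).drop j))) =
      lcpLen ((t0++t1).drop i) ((t0++t1).drop j) by omega]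
  right
  refine ⟨?_, ?_, ?_⟩
  · rw [List.length_take]; omega
  · rw [List.length_take]; omega
  · rw [HM.getD_take' _ default (by omega), HM.getD_take' _ default (by omega)]
    exact hgetlt

lemma HM.keyNe (hsent : Sentinels t0 t1) {h i j : ℕ}
    (hi : i < t0.length + t1.length) (hj : j < t0.length + t1.length) (hij : i ≠ j)
    (hd : lcpLen ((t0++t1).drop i) ((t0++t1).drop j) < h) :
    HM.gkey t0 t1 h i ≠ HM.gkey t0 t1 h j := by
  rcases lt_trichotomy ((t0++t1).drop i) ((t0++t1).drop j) with hlt | heq | hgt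
  · exact ne_of_lt (HM.keyLt hsent hi hj hij hd hlt)
  · exfalso
    have := congrArg List.length heq
    simp only [List.length_drop, List.length_append] at this
    omega
  · refine (ne_of_lt (HM.keyLt hsent hj hi hij.symm ?_ hgt)).symm
    rw [HM.lcpLen_comm]; exact hd

lemma HM.keyLe (hsent : Sentinels t0 t1) {h i j : ℕ}
    (hi : i < t0.length + t1.length) (hj : j < t0.length + t1.length)
    (hlt : (t0++t1).drop i < (t0++t1).drop j) :
    HM.gkey t0 t1 h i ≤ HM.gkey t0 t1 h j := by
  have hij : i ≠ j := by
    rintro rfl; exact lt_irrefl _ hlt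
  by_cases hd : h ≤ lcpLen ((t0++t1).drop i) ((t0++t1).drop j)
  · exact le_of_eq (HM.keyEq hsent hi hj hd)
  · exact le_of_lt (HM.keyLt hsent hi hj hij (by omega) hlt)

/-- P9 -/
lemma HM.gkey_head (hsent : Sentinels t0 t1) {h i : ℕ}
    (hi : i < t0.length + t1.length) (hh : 0 < h) :
    ∃ tl, HM.gkey t0 t1 h i = (t0++t1).getD i default :: tl := by
  have hlp := HM.nsuf_len_pos (t0 := t0) (t1 := t1) hi
  have hhead : (HM.nsuf t0 t1 i).getD 0 default = (t0++t1).getD i default := by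
    rw [HM.getD_prefix (HM.nsuf_prefix i) default hlp]
    rw [HM.getD_drop' (t0++t1) default (by simp; omega), Nat.add_zero]
  cases hns : HM.nsuf t0 t1 i with
  | nil => rw [hns] at hlp; simp at hlp
  | cons a tl0 =>
    refine ⟨tl0.take (h-1), ?_⟩
    unfold HM.gkey
    rw [hns] at hhead ⊢
    simp only [List.getD_cons_zero] at hhead
    rw [← hhead]
    conv_lhs => rw [show h = (h-1) + 1 by omega]
    rw [List.take_succ_cons]

end Sentinel

section SA
variable {A : Type*} [LinearOrder A] [Inhabited A]
variable {t : List A} {sa : ℕ → ℕ}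

lemma HM.sa_lt' (hsa : isSuffixArray t sa) {p : ℕ} (hp : p < t.length) : sa p < t.length := by
  have := hsa.1.1 (show p ∈ Set.Iio t.length from hp)
  simpa using this

lemma HM.sa_inj' (hsa : isSuffixArray t sa) {p q : ℕ} (hp : p < t.length) (hq : q < t.length)
    (h : sa p = sa q) : p = q :=
  hsa.1.2.1 (show p ∈ Set.Iio t.length from hp) (show q ∈ Set.Iio t.length from hq) h

lemma HM.suffix_lt' (hsa : isSuffixArray t sa) {p q : ℕ} (hpq : p < q) (hq : q < t.length) :
    t.drop (sa p) < t.drop (sa q) := hsa.2 p q hpq hq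

end SA

section SA01
variable {A : Type*} [LinearOrder A] [Inhabited A]
variable {t0 t1 : List A} {sa0 sa1 sa01 : ℕ → ℕ}

lemma HM.len01 (t0 t1 : List A) : (t0++t1).length = t0.length + t1.length := by simp

lemma HM.sa01_lt (hsa : isSuffixArray (t0++t1) sa01) {p : ℕ}
    (hp : p < t0.length + t1.length) : sa01 p < t0.length + t1.length := by
  have := HM.sa_lt' hsa (p := p) (by rw [HM.len01]; omega)
  rwa [HM.len01] at this

lemma HM.sa01_inj (hsa : isSuffixArray (t0++t1) sa01) {p q : ℕ}
    (hp : p < t0.length + t1.length) (hq : q < t0.length + t1.length)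
    (h : sa01 p = sa01 q) : p = q :=
  HM.sa_inj' hsa (by rw [HM.len01]; omega) (by rw [HM.len01]; omega) h

lemma HM.suffix01_lt (hsa : isSuffixArray (t0++t1) sa01) {p q : ℕ} (hpq : p < q)
    (hq : q < t0.length + t1.length) :
    (t0++t1).drop (sa01 p) < (t0++t1).drop (sa01 q) :=
  HM.suffix_lt' hsa hpq (by rw [HM.len01]; omega)

lemma HM.gkey_mono (hsent : Sentinels t0 t1) (hsa : isSuffixArray (t0++t1) sa01)
    {h p q : ℕ} (hpq : p ≤ q) (hq : q < t0.length + t1.length) :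
    HM.gkey t0 t1 h (sa01 p) ≤ HM.gkey t0 t1 h (sa01 q) := by
  rcases eq_or_lt_of_le hpq with rfl | hlt
  · exact le_refl _
  · exact HM.keyLe hsent (HM.sa01_lt hsa (by omega)) (HM.sa01_lt hsa hq)
      (HM.suffix01_lt hsa hlt hq)

lemma HM.lcpArr_eq {j : ℕ} (h0 : 0 < j) (hn : j < t0.length + t1.length) :
    lcpArr (t0++t1) sa01 j =
      (lcpLen ((t0++t1).drop (sa01 (j-1))) ((t0++t1).drop (sa01 j)) : ℤ) := by
  unfold lcpArr
  rw [if_neg (by rw [HM.len01]; omega)]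

lemma HM.lcpArr_neg {j : ℕ} (h : j = 0 ∨ t0.length + t1.length ≤ j) :
    lcpArr (t0++t1) sa01 j = -1 := by
  unfold lcpArr
  rw [if_pos (by rw [HM.len01]; omega)]

lemma HM.lcpArr_lt_bounds {h j : ℕ} (hnot : ¬ lcpArr (t0++t1) sa01 j < (h:ℤ)) :
    0 < j ∧ j < t0.length + t1.length := by
  by_contra hc
  push_neg at hnot
  rw [HM.lcpArr_neg (by omega)] at hnot
  omega

lemma HM.lcp_pair (hsa : isSuffixArray (t0++t1) sa01) {h p q : ℕ} (hpq : p < q)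
    (hq : q < t0.length + t1.length)
    (hmid : ∀ i, p < i → i ≤ q → (h:ℤ) ≤ lcpArr (t0++t1) sa01 i) :
    h ≤ lcpLen ((t0++t1).drop (sa01 p)) ((t0++t1).drop (sa01 q)) := by
  induction q with
  | zero => omega
  | succ q ih =>
    have hbase : (h:ℤ) ≤ lcpArr (t0++t1) sa01 (q+1) := hmid (q+1) (by omega) (le_refl _)
    rw [HM.lcpArr_eq (by omega) hq] at hbase
    have hadj : h ≤ lcpLen ((t0++t1).drop (sa01 q)) ((t0++t1).drop (sa01 (q+1))) := by
      have : (q + 1) - 1 = q := by omega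
      rw [this] at hbase
      exact_mod_cast hbase
    rcases eq_or_lt_of_le (show p + 1 ≤ q + 1 by omega) with heq | hlt
    · have : p = q := by omega
      subst this; exact hadj
    · have hpq' : p < q := by omega
      have hq' : q < t0.length + t1.length := by omega
      have hprev := ih hpq' hq' (fun i h1 h2 => hmid i h1 (by omega))
      have hord1 : (t0++t1).drop (sa01 p) ≤ (t0++t1).drop (sa01 q) :=
        le_of_lt (HM.suffix01_lt hsa hpq' hq')
      have hord2 : (t0++t1).drop (sa01 q) ≤ (t0++t1).drop (sa01 (q+1)) :=
        le_of_lt (HM.suffix01_lt hsa (by omega) hq)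
      have := HM.min_lcp_le hord1 hord2
      omega

lemma HM.blockstart_eq (hsa : isSuffixArray (t0++t1) sa01) {h b1 b2 : ℕ}
    (hb1 : b1 < t0.length + t1.length) (hb2 : b2 < t0.length + t1.length)
    (h1 : lcpArr (t0++t1) sa01 b1 < (h:ℤ)) (h2 : lcpArr (t0++t1) sa01 b2 < (h:ℤ))
    (hle : b1 ≤ b2)
    (hlcp : h ≤ lcpLen ((t0++t1).drop (sa01 b1)) ((t0++t1).drop (sa01 b2))) : b1 = b2 := by
  rcases eq_or_lt_of_le hle with rfl | hlt
  · rfl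
  exfalso
  have h0 : 0 < b2 := by omega
  rw [HM.lcpArr_eq h0 hb2] at h2
  have hord1 : (t0++t1).drop (sa01 b1) ≤ (t0++t1).drop (sa01 (b2-1)) := by
    rcases eq_or_lt_of_le (show b1 ≤ b2 - 1 by omega) with heq | hlt'
    · rw [heq]
    · exact le_of_lt (HM.suffix01_lt hsa hlt' (by omega))
  have hord2 : (t0++t1).drop (sa01 (b2-1)) ≤ (t0++t1).drop (sa01 b2) :=
    le_of_lt (HM.suffix01_lt hsa (by omega) hb2)
  have := HM.lcpLen_le_middle_right hord1 hord2
  have h2' : lcpLen ((t0++t1).drop (sa01 (b2-1))) ((t0++t1).drop (sa01 b2)) < h := by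
    exact_mod_cast h2
  omega

end SA01

section BWT
variable {A : Type*} [LinearOrder A] [Inhabited A]
variable {t0 t1 : List A} {sa0 sa1 : ℕ → ℕ}

lemma HM.bwtList_getD {t : List A} {sa : ℕ → ℕ} {r : ℕ} (hr : r < t.length) :
    (bwtList t sa).getD r default = bwtOf t sa r := by
  rw [bwtList, List.getD_eq_getElem _ _ (by simpa using hr)]
  simp

lemma HM.bwt0_sent (hsent : Sentinels t0 t1) {ρ : ℕ} (h0 : sa0 ρ = 0) :
    bwtOf t0 sa0 ρ = t0.getLast! := by
  unfold bwtOf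
  rw [if_pos h0]
  exact (HM.getLast!_eq_getD hsent.1).symm

lemma HM.bwt1_sent (hsent : Sentinels t0 t1) {ρ : ℕ} (h0 : sa1 ρ = 0) :
    bwtOf t1 sa1 ρ = t1.getLast! := by
  unfold bwtOf
  rw [if_pos h0]
  exact (HM.getLast!_eq_getD hsent.2.1).symm

lemma HM.bwt0_char (hsent : Sentinels t0 t1) (hsa0 : isSuffixArray t0 sa0) {ρ : ℕ}
    (hρ : ρ < t0.length) (h0 : sa0 ρ ≠ 0) :
    bwtOf t0 sa0 ρ = (t0++t1).getD (sa0 ρ - 1) default ∧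
      bwtOf t0 sa0 ρ ≠ t0.getLast! ∧ bwtOf t0 sa0 ρ ≠ t1.getLast! := by
  have hs := HM.sa_lt' hsa0 hρ
  have hn0 := HM.n0_pos hsent
  have hn1 := HM.n1_pos hsent
  have h1 : bwtOf t0 sa0 ρ = (t0++t1).getD (sa0 ρ - 1) default := by
    unfold bwtOf
    rw [if_neg h0, List.getD_append _ _ _ _ (by omega)]
  refine ⟨h1, ?_, ?_⟩
  · rw [h1]; intro hc
    have := HM.sent_unique0 hsent (by omega) hc
    omega
  · rw [h1]; intro hc
    have := HM.sent_unique1 hsent (by omega) hc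
    omega

lemma HM.bwt1_char (hsent : Sentinels t0 t1) (hsa1 : isSuffixArray t1 sa1) {ρ : ℕ}
    (hρ : ρ < t1.length) (h0 : sa1 ρ ≠ 0) :
    bwtOf t1 sa1 ρ = (t0++t1).getD (t0.length + sa1 ρ - 1) default ∧
      bwtOf t1 sa1 ρ ≠ t0.getLast! ∧ bwtOf t1 sa1 ρ ≠ t1.getLast! := by
  have hs := HM.sa_lt' hsa1 hρ
  have hn0 := HM.n0_pos hsent
  have hn1 := HM.n1_pos hsent
  have h1 : bwtOf t1 sa1 ρ = (t0++t1).getD (t0.length + sa1 ρ - 1) default := by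
    unfold bwtOf
    rw [if_neg h0, List.getD_append_right _ _ _ _ (by omega)]
    congr 1
    omega
  refine ⟨h1, ?_, ?_⟩
  · rw [h1]; intro hc
    have := HM.sent_unique0 hsent (by omega) hc
    omega
  · rw [h1]; intro hc
    have := HM.sent_unique1 hsent (by omega) hc
    omega

end BWT

section Pidx

lemma HM.pidx_lt {n0 n1 i : ℕ} (h0 : 0 < n0) (h1 : 0 < n1) (hi : i < n0+n1) :
    HM.pidx n0 n1 i < n0+n1 := by
  unfold HM.pidx; split_ifs <;> omega

lemma HM.pidx_side {n0 n1 i : ℕ} (h0 : 0 < n0) (h1 : 0 < n1) (hi : i < n0+n1) :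
    (HM.pidx n0 n1 i < n0 ↔ i < n0) := by
  unfold HM.pidx; split_ifs <;> omega

lemma HM.pidx_inj {n0 n1 i j : ℕ} (h0 : 0 < n0) (h1 : 0 < n1)
    (hi : i < n0+n1) (hj : j < n0+n1) (he : HM.pidx n0 n1 i = HM.pidx n0 n1 j) : i = j := by
  unfold HM.pidx at he; split_ifs at he <;> omega

end Pidx

section Src
variable {A : Type*} [LinearOrder A] [Inhabited A]
variable {t0 t1 : List A} {sa0 sa1 : ℕ → ℕ}

lemma HM.count_false_eq {Z : List Bool} (hZlen : Z.length = t0.length + t1.length)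
    (hZc : Z.count true = t1.length) : Z.count false = t0.length := by
  have := HM.count_bool Z
  omega

lemma HM.srcOf_false (hsa0 : isSuffixArray t0 sa0) {Z : List Bool}
    (hZlen : Z.length = t0.length + t1.length) (hZc : Z.count true = t1.length)
    {p : ℕ} (hp : p < t0.length + t1.length) (hb : Z.getD p false = false) :
    HM.srcOf t0.length sa0 sa1 Z p = sa0 ((Z.take p).count false) ∧
      (Z.take p).count false < t0.length ∧
      HM.srcOf t0.length sa0 sa1 Z p < t0.length := by
  have hr : (Z.take p).count false < t0.length := by
    have := HM.count_take_lt (l := Z) (by omega) hb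
    rw [HM.count_false_eq hZlen hZc] at this
    exact this
  have hs : HM.srcOf t0.length sa0 sa1 Z p = sa0 ((Z.take p).count false) := by
    unfold HM.srcOf
    rw [hb]
    simp
  exact ⟨hs, hr, by rw [hs]; exact HM.sa_lt' hsa0 hr⟩

lemma HM.srcOf_true (hsa1 : isSuffixArray t1 sa1) {Z : List Bool}
    (hZlen : Z.length = t0.length + t1.length) (hZc : Z.count true = t1.length)
    {p : ℕ} (hp : p < t0.length + t1.length) (hb : Z.getD p false = true) :
    HM.srcOf t0.length sa0 sa1 Z p = t0.length + sa1 ((Z.take p).count true) ∧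
      (Z.take p).count true < t1.length ∧
      t0.length ≤ HM.srcOf t0.length sa0 sa1 Z p ∧
      HM.srcOf t0.length sa0 sa1 Z p < t0.length + t1.length := by
  have hr : (Z.take p).count true < t1.length := by
    have := HM.count_take_lt (l := Z) (by omega) hb
    rw [hZc] at this
    exact this
  have hs : HM.srcOf t0.length sa0 sa1 Z p = t0.length + sa1 ((Z.take p).count true) := by
    unfold HM.srcOf
    rw [hb]
    simp
  have := HM.sa_lt' hsa1 hr
  exact ⟨hs, hr, by omega, by omega⟩

lemma HM.srcOf_lt (hsa0 : isSuffixArray t0 sa0) (hsa1 : isSuffixArray t1 sa1)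
    {Z : List Bool} (hZlen : Z.length = t0.length + t1.length)
    (hZc : Z.count true = t1.length) {p : ℕ} (hp : p < t0.length + t1.length) :
    HM.srcOf t0.length sa0 sa1 Z p < t0.length + t1.length := by
  cases hb : Z.getD p false with
  | false =>
    have := (HM.srcOf_false (sa1 := sa1) hsa0 hZlen hZc hp hb).2.2
    omega
  | true => exact (HM.srcOf_true (sa0 := sa0) hsa1 hZlen hZc hp hb).2.2.2

lemma HM.srcOf_inj (hsa0 : isSuffixArray t0 sa0) (hsa1 : isSuffixArray t1 sa1)
    {Z : List Bool} (hZlen : Z.length = t0.length + t1.length)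
    (hZc : Z.count true = t1.length) {p q : ℕ}
    (hp : p < t0.length + t1.length) (hq : q < t0.length + t1.length)
    (he : HM.srcOf t0.length sa0 sa1 Z p = HM.srcOf t0.length sa0 sa1 Z q) : p = q := by
  by_contra hne
  cases hbp : Z.getD p false with
  | false =>
    obtain ⟨hs1, hr1, hl1⟩ := HM.srcOf_false (sa1 := sa1) hsa0 hZlen hZc hp hbp
    cases hbq : Z.getD q false with
    | false =>
      obtain ⟨hs2, hr2, hl2⟩ := HM.srcOf_false (sa1 := sa1) hsa0 hZlen hZc hq hbq
      rw [hs1, hs2] at he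
      have hre := HM.sa_inj' hsa0 hr1 hr2 he
      rcases lt_or_gt_of_ne hne with hlt | hgt
      · have := HM.count_take_lt_take hlt (by omega) hbp; omega
      · have := HM.count_take_lt_take hgt (by omega) hbq; omega
    | true =>
      have := (HM.srcOf_true (sa0 := sa0) hsa1 hZlen hZc hq hbq).2.2.1
      omega
  | true =>
    obtain ⟨hs1, hr1, hge1, hl1⟩ := HM.srcOf_true (sa0 := sa0) hsa1 hZlen hZc hp hbp
    cases hbq : Z.getD q false with
    | false =>
      have := (HM.srcOf_false (sa1 := sa1) hsa0 hZlen hZc hq hbq).2.2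
      omega
    | true =>
      obtain ⟨hs2, hr2, hge2, hl2⟩ := HM.srcOf_true (sa0 := sa0) hsa1 hZlen hZc hq hbq
      rw [hs1, hs2] at he
      have hre := HM.sa_inj' hsa1 hr1 hr2 (by omega)
      rcases lt_or_gt_of_ne hne with hlt | hgt
      · have := HM.count_take_lt_take hlt (by omega) hbp; omega
      · have := HM.count_take_lt_take hgt (by omega) hbq; omega

lemma HM.keyAt_eq (hsa0 : isSuffixArray t0 sa0) (hsa1 : isSuffixArray t1 sa1)
    {h : ℕ} {Z : List Bool} (hZlen : Z.length = t0.length + t1.length)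
    (hZc : Z.count true = t1.length) {p : ℕ} (hp : p < t0.length + t1.length) :
    keyAt t0 t1 sa0 sa1 h Z p = HM.gkey t0 t1 h (HM.srcOf t0.length sa0 sa1 Z p) := by
  cases hb : Z.getD p false with
  | false =>
    obtain ⟨hs, hr, hl⟩ := HM.srcOf_false (sa1 := sa1) hsa0 hZlen hZc hp hb
    unfold keyAt
    rw [hb, hs]
    simp only [Bool.false_eq_true, if_false]
    unfold HM.gkey HM.nsuf
    rw [if_pos (by rw [hs] at hl; exact hl)]
  | true =>
    obtain ⟨hs, hr, hge, hl⟩ := HM.srcOf_true (sa0 := sa0) hsa1 hZlen hZc hp hb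
    unfold keyAt
    rw [hb, hs]
    simp only [if_true]
    unfold HM.gkey HM.nsuf
    rw [if_neg (by omega)]
    congr 2
    omega

end Src

/-! ### One step of the modified algorithm -/

def HM.pairfn {A : Type*} [Inhabited A] (bwt0 bwt1 : List A)
    (Z : List Bool) (B : List ℕ) (k : ℕ) : Bool × A × ℕ :=
  (Z.getD k false,
   (if Z.getD k false then bwt1.getD ((Z.take k).count true) default
    else bwt0.getD ((Z.take k).count false) default),
   blockIdAt B k)

def HM.ekey {A : Type*} [LinearOrder A] [Inhabited A] (t0 t1 : List A) (sa01 : ℕ → ℕ)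
    (h : ℕ) (e : Bool × A × ℕ) : List A :=
  e.2.1 :: (if e.2.1 = t0.getLast! ∨ e.2.1 = t1.getLast! then []
            else HM.gkey t0 t1 h (sa01 e.2.2))

section Step
variable {A : Type*} [LinearOrder A] [Inhabited A]
variable {t0 t1 : List A} {sa0 sa1 sa01 : ℕ → ℕ}

lemma HM.drop_last {l : List A} (hl : l ≠ []) : l.drop (l.length - 1) = [l.getLast!] := by
  have h0 : 0 < l.length := List.length_pos_iff.mpr hl
  rw [List.drop_eq_getElem_cons (by omega)]
  rw [List.drop_eq_nil_of_le (by omega)]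
  congr 1
  rw [HM.getLast!_eq_getD hl, List.getD_eq_getElem _ _ (by omega)]

lemma HM.bid_key (hsent : Sentinels t0 t1) (hsa01 : isSuffixArray (t0++t1) sa01)
    {h : ℕ} {B : List ℕ} {k : ℕ} (hB0 : B.getD 0 0 ≠ 0)
    (hBiff : ∀ j ≤ t0.length + t1.length,
      (B.getD j 0 ≠ 0 ↔ lcpArr (t0++t1) sa01 j < (h:ℤ)))
    (hk : k < t0.length + t1.length) :
    HM.gkey t0 t1 h (sa01 (blockIdAt B k)) = HM.gkey t0 t1 h (sa01 k) := by
  have hble := HM.blockIdAt_le B k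
  have hbne := HM.blockIdAt_ne_zero hB0 k
  have hstart : lcpArr (t0++t1) sa01 (blockIdAt B k) < (h:ℤ) :=
    (hBiff _ (by omega)).mp hbne
  rcases eq_or_lt_of_le hble with heq | hlt
  · rw [heq]
  · have hmid : ∀ i, blockIdAt B k < i → i ≤ k → (h:ℤ) ≤ lcpArr (t0++t1) sa01 i := by
      intro i h1 h2
      by_contra hc
      push_neg at hc
      have hne : B.getD i 0 ≠ 0 := (hBiff i (by omega)).mpr hc
      have := HM.le_blockIdAt (B := B) (show i ≤ k by omega) hne
      omega
    have hlcp := HM.lcp_pair hsa01 hlt hk hmid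
    exact HM.keyEq hsent (HM.sa01_lt hsa01 (by omega)) (HM.sa01_lt hsa01 hk) hlcp

lemma HM.step_ekey (hsent : Sentinels t0 t1) (hsa0 : isSuffixArray t0 sa0)
    (hsa1 : isSuffixArray t1 sa1) (hsa01 : isSuffixArray (t0++t1) sa01)
    {h : ℕ} {Z : List Bool} {B : List ℕ}
    (hZlen : Z.length = t0.length + t1.length) (hZcnt : Z.count true = t1.length)
    (hZkey : ∀ p < t0.length + t1.length,
      HM.gkey t0 t1 h (HM.srcOf t0.length sa0 sa1 Z p) = HM.gkey t0 t1 h (sa01 p))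
    (hB0 : B.getD 0 0 ≠ 0)
    (hBiff : ∀ j ≤ t0.length + t1.length,
      (B.getD j 0 ≠ 0 ↔ lcpArr (t0++t1) sa01 j < (h:ℤ)))
    {k : ℕ} (hk : k < t0.length + t1.length) :
    HM.ekey t0 t1 sa01 h (HM.pairfn (bwtList t0 sa0) (bwtList t1 sa1) Z B k)
      = HM.gkey t0 t1 (h+1) (HM.pidx t0.length t1.length (HM.srcOf t0.length sa0 sa1 Z k)) := by
  have hn0 := HM.n0_pos hsent
  have hn1 := HM.n1_pos hsent
  have hbk := HM.bid_key hsent hsa01 hB0 hBiff hk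
  cases hb : Z.getD k false with
  | false =>
    obtain ⟨hs, hr, hl⟩ := HM.srcOf_false (sa1 := sa1) hsa0 hZlen hZcnt hk hb
    have hpf : HM.pairfn (bwtList t0 sa0) (bwtList t1 sa1) Z B k
        = (false, bwtOf t0 sa0 ((Z.take k).count false), blockIdAt B k) := by
      unfold HM.pairfn
      rw [hb]
      simp only [Bool.false_eq_true, if_false]
      rw [HM.bwtList_getD hr]
    rw [hpf, hs]
    by_cases h0 : sa0 ((Z.take k).count false) = 0
    · have hcs : bwtOf t0 sa0 ((Z.take k).count false) = t0.getLast! := HM.bwt0_sent hsent h0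
      unfold HM.ekey
      simp only
      rw [hcs, if_pos (Or.inl rfl), h0]
      rw [show HM.pidx t0.length t1.length 0 = t0.length - 1 by
        unfold HM.pidx; split_ifs <;> omega]
      unfold HM.gkey HM.nsuf
      rw [if_pos (by omega), HM.drop_last hsent.1]
      rw [show h + 1 = 1 + h by omega, List.take_add]
      simp
    · obtain ⟨hceq, hcn0, hcn1⟩ := HM.bwt0_char hsent hsa0 hr h0
      have hslt : sa0 ((Z.take k).count false) < t0.length := HM.sa_lt' hsa0 hr
      unfold HM.ekey
      simp only
      rw [if_neg (by push_neg; exact ⟨hcn0, hcn1⟩)]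
      rw [hbk, ← hZkey k hk, hs]
      rw [show HM.pidx t0.length t1.length (sa0 ((Z.take k).count false))
          = sa0 ((Z.take k).count false) - 1 by
        unfold HM.pidx; split_ifs <;> omega]
      unfold HM.gkey HM.nsuf
      rw [if_pos hslt, if_pos (by omega)]
      rw [List.drop_eq_getElem_cons (show sa0 ((Z.take k).count false) - 1 < t0.length by omega),
        List.take_succ_cons]
      rw [show sa0 ((Z.take k).count false) - 1 + 1 = sa0 ((Z.take k).count false) by omega]
      congr 1
      rw [hceq, List.getD_append _ _ _ _ (by omega), List.getD_eq_getElem _ _ (by omega)]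
  | true =>
    obtain ⟨hs, hr, hge, hl⟩ := HM.srcOf_true (sa0 := sa0) hsa1 hZlen hZcnt hk hb
    have hpf : HM.pairfn (bwtList t0 sa0) (bwtList t1 sa1) Z B k
        = (true, bwtOf t1 sa1 ((Z.take k).count true), blockIdAt B k) := by
      unfold HM.pairfn
      rw [hb]
      simp only [if_true]
      rw [HM.bwtList_getD hr]
    rw [hpf, hs]
    by_cases h0 : sa1 ((Z.take k).count true) = 0
    · have hcs : bwtOf t1 sa1 ((Z.take k).count true) = t1.getLast! := HM.bwt1_sent hsent h0
      unfold HM.ekey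
      simp only
      rw [hcs, if_pos (Or.inr rfl), h0]
      rw [show HM.pidx t0.length t1.length (t0.length + 0) = t0.length + t1.length - 1 by
        unfold HM.pidx; split_ifs <;> omega]
      unfold HM.gkey HM.nsuf
      rw [if_neg (by omega)]
      rw [show t0.length + t1.length - 1 - t0.length = t1.length - 1 by omega]
      rw [HM.drop_last hsent.2.1]
      rw [show h + 1 = 1 + h by omega, List.take_add]
      simp
    · obtain ⟨hceq, hcn0, hcn1⟩ := HM.bwt1_char hsent hsa1 hr h0
      have hslt : sa1 ((Z.take k).count true) < t1.length := HM.sa_lt' hsa1 hr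
      unfold HM.ekey
      simp only
      rw [if_neg (by push_neg; exact ⟨hcn0, hcn1⟩)]
      rw [hbk, ← hZkey k hk, hs]
      rw [show HM.pidx t0.length t1.length (t0.length + sa1 ((Z.take k).count true))
          = t0.length + sa1 ((Z.take k).count true) - 1 by
        unfold HM.pidx; split_ifs <;> omega]
      unfold HM.gkey HM.nsuf
      rw [if_neg (by omega), if_neg (by omega)]
      rw [show t0.length + sa1 ((Z.take k).count true) - t0.length
          = sa1 ((Z.take k).count true) by omega]
      rw [show t0.length + sa1 ((Z.take k).count true) - 1 - t0.length
          = sa1 ((Z.take k).count true) - 1 by omega]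
      rw [List.drop_eq_getElem_cons (show sa1 ((Z.take k).count true) - 1 < t1.length by omega),
        List.take_succ_cons]
      rw [show sa1 ((Z.take k).count true) - 1 + 1 = sa1 ((Z.take k).count true) by omega]
      congr 1
      rw [hceq, List.getD_append_right _ _ _ _ (by omega), List.getD_eq_getElem _ _ (by omega)]
      congr 1
      omega

end Step

section Step2
variable {A : Type*} [LinearOrder A] [Inhabited A]
variable {t0 t1 : List A} {sa0 sa1 sa01 : ℕ → ℕ}

lemma HM.cmp_trans : ∀ (a b c : Bool × A × ℕ),
    (fun p q : Bool × A × ℕ => decide (p.2.1 ≤ q.2.1)) a b = true →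
    (fun p q : Bool × A × ℕ => decide (p.2.1 ≤ q.2.1)) b c = true →
    (fun p q : Bool × A × ℕ => decide (p.2.1 ≤ q.2.1)) a c = true := by
  intro a b c h1 h2
  simp only [decide_eq_true_eq] at *
  exact le_trans h1 h2

lemma HM.cmp_total : ∀ (a b : Bool × A × ℕ),
    ((fun p q : Bool × A × ℕ => decide (p.2.1 ≤ q.2.1)) a b ||
     (fun p q : Bool × A × ℕ => decide (p.2.1 ≤ q.2.1)) b a) = true := by
  intro a b
  simpa using le_total a.2.1 b.2.1

lemma HM.count_Z_eq {Z : List Bool} {B : List ℕ} (bwt0 bwt1 : List A) (b : Bool) :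
    ((List.range Z.length).map (HM.pairfn bwt0 bwt1 Z B)).countP (fun e => e.1 == b)
      = Z.count b := by
  rw [List.countP_map]
  conv_rhs => rw [← HM.map_getD_range Z false, List.count_eq_countP, List.countP_map]
  rfl

lemma HM.step_sorted (hsent : Sentinels t0 t1) (hsa0 : isSuffixArray t0 sa0)
    (hsa1 : isSuffixArray t1 sa1) (hsa01 : isSuffixArray (t0++t1) sa01)
    {h : ℕ} {Z : List Bool} {B : List ℕ}
    (hZlen : Z.length = t0.length + t1.length) (hZcnt : Z.count true = t1.length)
    (hZkey : ∀ p < t0.length + t1.length,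
      HM.gkey t0 t1 h (HM.srcOf t0.length sa0 sa1 Z p) = HM.gkey t0 t1 h (sa01 p))
    (hB0 : B.getD 0 0 ≠ 0)
    (hBiff : ∀ j ≤ t0.length + t1.length,
      (B.getD j 0 ≠ 0 ↔ lcpArr (t0++t1) sa01 j < (h:ℤ))) :
    (((List.range Z.length).map
          (HM.pairfn (bwtList t0 sa0) (bwtList t1 sa1) Z B)).mergeSort
        (fun p q => decide (p.2.1 ≤ q.2.1))).map (HM.ekey t0 t1 sa01 h)
      = (List.range (t0.length + t1.length)).map
          (fun p => HM.gkey t0 t1 (h+1) (sa01 p)) := by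
  have hn0 := HM.n0_pos hsent
  have hn1 := HM.n1_pos hsent
  set pairs := (List.range Z.length).map
      (HM.pairfn (bwtList t0 sa0) (bwtList t1 sa1) Z B) with hpairsdef
  set sorted := pairs.mergeSort (fun p q => decide (p.2.1 ≤ q.2.1)) with hsorteddef
  have hperm : sorted.Perm pairs := List.mergeSort_perm pairs _
  -- membership
  have hmem : ∀ e ∈ sorted, ∃ k, k < t0.length + t1.length ∧
      e = HM.pairfn (bwtList t0 sa0) (bwtList t1 sa1) Z B k := by
    intro e he
    have h1 := hperm.mem_iff.mp he
    rw [hpairsdef] at h1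
    obtain ⟨k, hk, rfl⟩ := List.mem_map.mp h1
    exact ⟨k, by rw [← hZlen]; exact List.mem_range.mp hk, rfl⟩
  -- pairwise on symbols
  have hpw_c : sorted.Pairwise (fun e e' : Bool × A × ℕ => e.2.1 ≤ e'.2.1) := by
    have := List.pairwise_mergeSort HM.cmp_trans HM.cmp_total pairs
    rw [← hsorteddef] at this
    exact this.imp (fun hab => by simpa using hab)
  -- stability
  have hstab : ∀ v : A, sorted.filter (fun e => e.2.1 == v)
      = pairs.filter (fun e => e.2.1 == v) := by
    intro v
    have hall : ∀ e ∈ pairs.filter (fun e => e.2.1 == v), e.2.1 = v := by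
      intro e he
      simpa using (List.mem_filter.mp he).2
    have hsub : pairs.filter (fun e => e.2.1 == v) <+ sorted := by
      apply List.sublist_mergeSort HM.cmp_trans HM.cmp_total
      · exact List.pairwise_of_forall_mem_list
          (fun a ha b hb => by simp [hall a ha, hall b hb])
      · exact List.filter_sublist
    have hsub2 : pairs.filter (fun e => e.2.1 == v)
        <+ sorted.filter (fun e => e.2.1 == v) := by
      have h2 := List.Sublist.filter (fun e => e.2.1 == v) hsub
      rwa [List.filter_eq_self.mpr (fun a ha => by simp [hall a ha])] at h2
    exact (hsub2.eq_of_length ((hperm.filter _).length_eq).symm).symm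
  -- pairwise on block ids in pairs
  have hpw_bid : pairs.Pairwise (fun e e' : Bool × A × ℕ => e.2.2 ≤ e'.2.2) := by
    rw [hpairsdef]
    rw [List.pairwise_map]
    exact List.pairwise_lt_range.imp
      (fun hab => HM.blockIdAt_mono B (le_of_lt hab))
  -- combined pairwise
  have hpw_R : sorted.Pairwise (fun e e' : Bool × A × ℕ =>
      e.2.1 < e'.2.1 ∨ (e.2.1 = e'.2.1 ∧ e.2.2 ≤ e'.2.2)) := by
    apply HM.pairwise_of_filter (fun e : Bool × A × ℕ => e.2.1)
      (fun e e' : Bool × A × ℕ => e.2.2 ≤ e'.2.2) sorted hpw_c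
    intro v
    rw [hstab v]
    exact hpw_bid.filter _
  -- pairwise of keys
  have hekey_le : sorted.Pairwise (fun e e' =>
      HM.ekey t0 t1 sa01 h e ≤ HM.ekey t0 t1 sa01 h e') := by
    apply hpw_R.imp_of_mem
    intro e e' he he' hr
    rcases hr with hlt | ⟨hcc, hbb⟩
    · exact le_of_lt (List.Lex.rel hlt)
    · unfold HM.ekey
      rw [← hcc]
      apply HM.cons_le_iff.mpr
      refine Or.inr ⟨rfl, ?_⟩
      split
      · exact le_refl _
      · obtain ⟨k', hk', rfl⟩ := hmem e' he'
        have hbound : (HM.pairfn (bwtList t0 sa0) (bwtList t1 sa1) Z B k').2.2 <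
            t0.length + t1.length := by
          have : (HM.pairfn (bwtList t0 sa0) (bwtList t1 sa1) Z B k').2.2
              = blockIdAt B k' := rfl
          rw [this]
          have := HM.blockIdAt_le B k'
          omega
        exact HM.gkey_mono hsent hsa01 hbb hbound
  have hS : (sorted.map (HM.ekey t0 t1 sa01 h)).Pairwise (· ≤ ·) :=
    List.pairwise_map.mpr hekey_le
  -- target sortedness
  have hT : ((List.range (t0.length + t1.length)).map
      (fun p => HM.gkey t0 t1 (h+1) (sa01 p))).Pairwise (· ≤ ·) := by
    rw [List.pairwise_map]
    apply List.pairwise_lt_range.imp_of_mem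
    intro p q hp hq hpq
    exact HM.gkey_mono hsent hsa01 (le_of_lt hpq) (List.mem_range.mp hq)
  -- permutation
  have hmapcongr : pairs.map (HM.ekey t0 t1 sa01 h)
      = (List.range Z.length).map (fun k =>
          HM.gkey t0 t1 (h+1) (HM.pidx t0.length t1.length
            (HM.srcOf t0.length sa0 sa1 Z k))) := by
    rw [hpairsdef, List.map_map]
    apply List.map_congr_left
    intro k hk
    exact HM.step_ekey hsent hsa0 hsa1 hsa01 hZlen hZcnt hZkey hB0 hBiff
      (by rw [← hZlen]; exact List.mem_range.mp hk)
  have hXnodup : ((List.range (t0.length + t1.length)).map (fun k =>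
      HM.pidx t0.length t1.length (HM.srcOf t0.length sa0 sa1 Z k))).Nodup := by
    apply List.Nodup.map_on _ List.nodup_range
    intro x hx y hy hxy
    have hx' := List.mem_range.mp hx
    have hy' := List.mem_range.mp hy
    have hsx := HM.srcOf_lt hsa0 hsa1 hZlen hZcnt hx'
    have hsy := HM.srcOf_lt hsa0 hsa1 hZlen hZcnt hy'
    have := HM.pidx_inj hn0 hn1 hsx hsy hxy
    exact HM.srcOf_inj hsa0 hsa1 hZlen hZcnt hx' hy' this
  have hYnodup : ((List.range (t0.length + t1.length)).map sa01).Nodup := by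
    apply List.Nodup.map_on _ List.nodup_range
    intro x hx y hy hxy
    exact HM.sa01_inj hsa01 (List.mem_range.mp hx) (List.mem_range.mp hy) hxy
  have hXfin : ((List.range (t0.length + t1.length)).map (fun k =>
      HM.pidx t0.length t1.length (HM.srcOf t0.length sa0 sa1 Z k))).toFinset
      = Finset.range (t0.length + t1.length) := by
    apply Finset.eq_of_subset_of_card_le
    · intro x hx
      rw [List.mem_toFinset] at hx
      obtain ⟨k, hk, rfl⟩ := List.mem_map.mp hx
      have hk' := List.mem_range.mp hk
      have := HM.pidx_lt hn0 hn1 (HM.srcOf_lt hsa0 hsa1 hZlen hZcnt hk')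
      simpa using this
    · rw [List.toFinset_card_of_nodup hXnodup]
      simp
  have hYfin : ((List.range (t0.length + t1.length)).map sa01).toFinset
      = Finset.range (t0.length + t1.length) := by
    apply Finset.eq_of_subset_of_card_le
    · intro x hx
      rw [List.mem_toFinset] at hx
      obtain ⟨k, hk, rfl⟩ := List.mem_map.mp hx
      simpa using HM.sa01_lt hsa01 (List.mem_range.mp hk)
    · rw [List.toFinset_card_of_nodup hYnodup]
      simp
  have hXY := List.perm_of_nodup_nodup_toFinset_eq hXnodup hYnodup (hXfin.trans hYfin.symm)
  have hperm2 : (sorted.map (HM.ekey t0 t1 sa01 h)).Perm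
      ((List.range (t0.length + t1.length)).map
        (fun p => HM.gkey t0 t1 (h+1) (sa01 p))) := by
    have h1 := hperm.map (HM.ekey t0 t1 sa01 h)
    rw [hmapcongr, hZlen] at h1
    have h2 := hXY.map (HM.gkey t0 t1 (h+1))
    rw [List.map_map, List.map_map] at h2
    exact h1.trans h2
  haveI : IsAntisymm (List A) (· ≤ ·) := ⟨fun a b h1 h2 => le_antisymm h1 h2⟩
  exact List.Perm.eq_of_pairwise' hS hT hperm2

end Step2

section Step3
variable {A : Type*} [LinearOrder A] [Inhabited A]
variable {t0 t1 : List A} {sa0 sa1 sa01 : ℕ → ℕ}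

lemma HM.gkey_single_mono (hsent : Sentinels t0 t1) (hsa0 : isSuffixArray t0 sa0)
    (hsa1 : isSuffixArray t1 sa1) {H : ℕ} (b : Bool) {ρ ρ' : ℕ} (hρρ : ρ < ρ')
    (hρ' : ρ' < (if b then t1.length else t0.length)) :
    HM.gkey t0 t1 H (if b then t0.length + sa1 ρ else sa0 ρ)
      ≤ HM.gkey t0 t1 H (if b then t0.length + sa1 ρ' else sa0 ρ') := by
  cases b with
  | false =>
    simp only [Bool.false_eq_true, if_false] at *
    have h1 := HM.sa_lt' hsa0 hρ'
    have h2 := HM.sa_lt' hsa0 (show ρ < t0.length by omega)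
    unfold HM.gkey HM.nsuf
    rw [if_pos h2, if_pos h1]
    exact HM.take_le_take H (le_of_lt (HM.suffix_lt' hsa0 hρρ hρ'))
  | true =>
    simp only [if_true] at *
    have h1 := HM.sa_lt' hsa1 hρ'
    have h2 := HM.sa_lt' hsa1 (show ρ < t1.length by omega)
    unfold HM.gkey HM.nsuf
    rw [if_neg (by omega), if_neg (by omega)]
    rw [show t0.length + sa1 ρ - t0.length = sa1 ρ by omega,
      show t0.length + sa1 ρ' - t0.length = sa1 ρ' by omega]
    exact HM.take_le_take H (le_of_lt (HM.suffix_lt' hsa1 hρρ hρ'))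

lemma HM.step_filter (hsent : Sentinels t0 t1) (hsa0 : isSuffixArray t0 sa0)
    (hsa1 : isSuffixArray t1 sa1) (hsa01 : isSuffixArray (t0++t1) sa01)
    {h : ℕ} {Z : List Bool} {B : List ℕ}
    (hZlen : Z.length = t0.length + t1.length) (hZcnt : Z.count true = t1.length)
    (hZkey : ∀ p < t0.length + t1.length,
      HM.gkey t0 t1 h (HM.srcOf t0.length sa0 sa1 Z p) = HM.gkey t0 t1 h (sa01 p))
    (hB0 : B.getD 0 0 ≠ 0)
    (hBiff : ∀ j ≤ t0.length + t1.length,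
      (B.getD j 0 ≠ 0 ↔ lcpArr (t0++t1) sa01 j < (h:ℤ))) (b : Bool) :
    ((((List.range Z.length).map
          (HM.pairfn (bwtList t0 sa0) (bwtList t1 sa1) Z B)).mergeSort
        (fun p q => decide (p.2.1 ≤ q.2.1))).filter
          (fun e => e.1 == b)).map (HM.ekey t0 t1 sa01 h)
      = (List.range (if b then t1.length else t0.length)).map
          (fun ρ => HM.gkey t0 t1 (h+1) (if b then t0.length + sa1 ρ else sa0 ρ)) := by
  have hn0 := HM.n0_pos hsent
  have hn1 := HM.n1_pos hsent
  set pairs := (List.range Z.length).map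
      (HM.pairfn (bwtList t0 sa0) (bwtList t1 sa1) Z B) with hpairsdef
  set sorted := pairs.mergeSort (fun p q => decide (p.2.1 ≤ q.2.1)) with hsorteddef
  have hperm : sorted.Perm pairs := List.mergeSort_perm pairs _
  have hmain := HM.step_sorted hsent hsa0 hsa1 hsa01 hZlen hZcnt hZkey hB0 hBiff
  rw [← hpairsdef, ← hsorteddef] at hmain
  -- LHS sortedness
  have hT : ((List.range (t0.length + t1.length)).map
      (fun p => HM.gkey t0 t1 (h+1) (sa01 p))).Pairwise (· ≤ ·) := by
    rw [List.pairwise_map]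
    apply List.pairwise_lt_range.imp_of_mem
    intro p q hp hq hpq
    exact HM.gkey_mono hsent hsa01 (le_of_lt hpq) (List.mem_range.mp hq)
  have hS0 : (sorted.map (HM.ekey t0 t1 sa01 h)).Pairwise (· ≤ ·) := by
    rw [hmain]; exact hT
  have hekey_le : sorted.Pairwise (fun e e' =>
      HM.ekey t0 t1 sa01 h e ≤ HM.ekey t0 t1 sa01 h e') := List.pairwise_map.mp hS0
  have hS : ((sorted.filter (fun e => e.1 == b)).map
      (HM.ekey t0 t1 sa01 h)).Pairwise (· ≤ ·) :=
    List.pairwise_map.mpr (hekey_le.filter _)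
  -- RHS sortedness
  have hR : ((List.range (if b then t1.length else t0.length)).map
      (fun ρ => HM.gkey t0 t1 (h+1)
        (if b then t0.length + sa1 ρ else sa0 ρ))).Pairwise (· ≤ ·) := by
    rw [List.pairwise_map]
    apply List.pairwise_lt_range.imp_of_mem
    intro ρ ρ' hρ hρ' hlt
    exact HM.gkey_single_mono hsent hsa0 hsa1 b hlt (List.mem_range.mp hρ')
  -- permutation
  have hfm : pairs.filter (fun e => e.1 == b)
      = ((List.range Z.length).filter (fun k =>
          (HM.pairfn (bwtList t0 sa0) (bwtList t1 sa1) Z B k).1 == b)).map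
            (HM.pairfn (bwtList t0 sa0) (bwtList t1 sa1) Z B) := by
    rw [hpairsdef, List.filter_map]
    rfl
  have hKmem : ∀ k ∈ (List.range Z.length).filter (fun k =>
      (HM.pairfn (bwtList t0 sa0) (bwtList t1 sa1) Z B k).1 == b),
      k < t0.length + t1.length ∧ Z.getD k false = b := by
    intro k hk
    obtain ⟨hk1, hk2⟩ := List.mem_filter.mp hk
    refine ⟨by rw [← hZlen]; exact List.mem_range.mp hk1, by simpa [HM.pairfn] using hk2⟩
  have hmc : (pairs.filter (fun e => e.1 == b)).map (HM.ekey t0 t1 sa01 h)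
      = ((List.range Z.length).filter (fun k =>
          (HM.pairfn (bwtList t0 sa0) (bwtList t1 sa1) Z B k).1 == b)).map
        (fun k => HM.gkey t0 t1 (h+1)
          (HM.pidx t0.length t1.length (HM.srcOf t0.length sa0 sa1 Z k))) := by
    rw [hfm, List.map_map]
    apply List.map_congr_left
    intro k hk
    exact HM.step_ekey hsent hsa0 hsa1 hsa01 hZlen hZcnt hZkey hB0 hBiff (hKmem k hk).1
  -- the index permutation
  have hsrcb : ∀ k, k < t0.length + t1.length → Z.getD k false = b →
      (if b then t0.length ≤ HM.srcOf t0.length sa0 sa1 Z k ∧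
          HM.srcOf t0.length sa0 sa1 Z k < t0.length + t1.length
        else HM.srcOf t0.length sa0 sa1 Z k < t0.length) := by
    intro k hk hkb
    cases b with
    | false =>
      simpa using (HM.srcOf_false (sa1 := sa1) hsa0 hZlen hZcnt hk hkb).2.2
    | true =>
      have := HM.srcOf_true (sa0 := sa0) hsa1 hZlen hZcnt hk hkb
      simp only [if_true]
      exact ⟨this.2.2.1, this.2.2.2⟩
  have hpidxside : ∀ i, i < t0.length + t1.length →
      (if b then t0.length ≤ i ∧ i < t0.length + t1.length else i < t0.length) →
      (if b then t0.length ≤ HM.pidx t0.length t1.length i ∧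
          HM.pidx t0.length t1.length i < t0.length + t1.length
        else HM.pidx t0.length t1.length i < t0.length) := by
    intro i hi hside
    cases b with
    | false =>
      simp only [Bool.false_eq_true, if_false] at *
      exact (HM.pidx_side hn0 hn1 hi).mpr hside
    | true =>
      simp only [if_true] at *
      have h1 := HM.pidx_lt hn0 hn1 hi
      have h2 := HM.pidx_side hn0 hn1 hi
      omega
  have hXnodup : (((List.range Z.length).filter (fun k =>
      (HM.pairfn (bwtList t0 sa0) (bwtList t1 sa1) Z B k).1 == b)).map
        (fun k => HM.pidx t0.length t1.length
          (HM.srcOf t0.length sa0 sa1 Z k))).Nodup := by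
    apply List.Nodup.map_on _ (List.nodup_range.filter _)
    intro x hx y hy hxy
    have hx' := (hKmem x hx).1
    have hy' := (hKmem y hy).1
    have hsx := HM.srcOf_lt hsa0 hsa1 hZlen hZcnt hx'
    have hsy := HM.srcOf_lt hsa0 hsa1 hZlen hZcnt hy'
    exact HM.srcOf_inj hsa0 hsa1 hZlen hZcnt hx' hy' (HM.pidx_inj hn0 hn1 hsx hsy hxy)
  have hYnodup : ((List.range (if b then t1.length else t0.length)).map
      (fun ρ => if b then t0.length + sa1 ρ else sa0 ρ)).Nodup := by
    apply List.Nodup.map_on _ List.nodup_range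
    intro x hx y hy hxy
    cases b with
    | false =>
      simp only [Bool.false_eq_true, if_false] at *
      exact HM.sa_inj' hsa0 (List.mem_range.mp hx) (List.mem_range.mp hy) hxy
    | true =>
      simp only [if_true] at *
      exact HM.sa_inj' hsa1 (List.mem_range.mp hx) (List.mem_range.mp hy) (by omega)
  have hKlen : ((List.range Z.length).filter (fun k =>
      (HM.pairfn (bwtList t0 sa0) (bwtList t1 sa1) Z B k).1 == b)).length
      = (if b then t1.length else t0.length) := by
    rw [← List.countP_eq_length_filter]
    have h1 : (List.range Z.length).countP (fun k =>
        (HM.pairfn (bwtList t0 sa0) (bwtList t1 sa1) Z B k).1 == b)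
        = pairs.countP (fun e => e.1 == b) := by
      rw [hpairsdef, List.countP_map]; rfl
    rw [h1, HM.count_Z_eq]
    cases b with
    | false => simpa using HM.count_false_eq hZlen hZcnt
    | true => simpa using hZcnt
  have hIb : ∀ s : Finset ℕ,
      (∀ x ∈ s, (if b then t0.length ≤ x ∧ x < t0.length + t1.length
        else x < t0.length)) →
      s.card = (if b then t1.length else t0.length) →
      s = (if b then Finset.Ico t0.length (t0.length + t1.length)
        else Finset.range t0.length) := by
    intro s hsub hcard
    apply Finset.eq_of_subset_of_card_le
    · intro x hx
      have := hsub x hx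
      cases b <;> simp_all [Finset.mem_Ico, Finset.mem_range]
    · cases b <;> simp [Nat.card_Ico, hcard]
  have hXfin := hIb (((List.range Z.length).filter (fun k =>
      (HM.pairfn (bwtList t0 sa0) (bwtList t1 sa1) Z B k).1 == b)).map
        (fun k => HM.pidx t0.length t1.length
          (HM.srcOf t0.length sa0 sa1 Z k))).toFinset
    (by
      intro x hx
      rw [List.mem_toFinset] at hx
      obtain ⟨k, hk, rfl⟩ := List.mem_map.mp hx
      obtain ⟨hk1, hk2⟩ := hKmem k hk
      exact hpidxside _ (HM.srcOf_lt hsa0 hsa1 hZlen hZcnt hk1) (hsrcb k hk1 hk2))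
    (by rw [List.toFinset_card_of_nodup hXnodup, List.length_map, hKlen])
  have hYfin := hIb ((List.range (if b then t1.length else t0.length)).map
      (fun ρ => if b then t0.length + sa1 ρ else sa0 ρ)).toFinset
    (by
      intro x hx
      rw [List.mem_toFinset] at hx
      obtain ⟨ρ, hρ, rfl⟩ := List.mem_map.mp hx
      have hρ' := List.mem_range.mp hρ
      cases b with
      | false =>
        simp only [Bool.false_eq_true, if_false] at *
        exact HM.sa_lt' hsa0 hρ'
      | true =>
        simp only [if_true] at *
        have := HM.sa_lt' hsa1 hρ'
        omega)
    (by rw [List.toFinset_card_of_nodup hYnodup, List.length_map, List.length_range])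
  have hXY := List.perm_of_nodup_nodup_toFinset_eq hXnodup hYnodup (hXfin.trans hYfin.symm)
  -- assemble permutation of key lists
  have hperm2 : ((sorted.filter (fun e => e.1 == b)).map
      (HM.ekey t0 t1 sa01 h)).Perm
      ((List.range (if b then t1.length else t0.length)).map
        (fun ρ => HM.gkey t0 t1 (h+1) (if b then t0.length + sa1 ρ else sa0 ρ))) := by
    have h1 := (hperm.filter (fun e => e.1 == b)).map (HM.ekey t0 t1 sa01 h)
    rw [hmc] at h1
    have h2 := hXY.map (HM.gkey t0 t1 (h+1))
    rw [List.map_map, List.map_map] at h2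
    exact h1.trans h2
  haveI : IsAntisymm (List A) (· ≤ ·) := ⟨fun a b h1 h2 => le_antisymm h1 h2⟩
  exact List.Perm.eq_of_pairwise' hS hR hperm2

end Step3

section Step4
variable {A : Type*} [LinearOrder A] [Inhabited A]
variable {t0 t1 : List A} {sa0 sa1 sa01 : ℕ → ℕ}

lemma HM.count_Zp_eq {Z : List Bool} {B : List ℕ} (bwt0 bwt1 : List A) (b : Bool) :
    ((((List.range Z.length).map (HM.pairfn bwt0 bwt1 Z B)).mergeSort
        (fun p q => decide (p.2.1 ≤ q.2.1))).map (fun e => e.1)).count b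
      = Z.count b := by
  rw [List.count_eq_countP, List.countP_map,
    (List.mergeSort_perm _ _).countP_eq]
  rw [← HM.count_Z_eq bwt0 bwt1 b (B := B)]
  rfl

lemma HM.step_key (hsent : Sentinels t0 t1) (hsa0 : isSuffixArray t0 sa0)
    (hsa1 : isSuffixArray t1 sa1) (hsa01 : isSuffixArray (t0++t1) sa01)
    {h : ℕ} {Z : List Bool} {B : List ℕ}
    (hZlen : Z.length = t0.length + t1.length) (hZcnt : Z.count true = t1.length)
    (hZkey : ∀ p < t0.length + t1.length,
      HM.gkey t0 t1 h (HM.srcOf t0.length sa0 sa1 Z p) = HM.gkey t0 t1 h (sa01 p))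
    (hB0 : B.getD 0 0 ≠ 0)
    (hBiff : ∀ j ≤ t0.length + t1.length,
      (B.getD j 0 ≠ 0 ↔ lcpArr (t0++t1) sa01 j < (h:ℤ)))
    {p : ℕ} (hp : p < t0.length + t1.length) :
    HM.gkey t0 t1 (h+1) (HM.srcOf t0.length sa0 sa1
        ((((List.range Z.length).map
            (HM.pairfn (bwtList t0 sa0) (bwtList t1 sa1) Z B)).mergeSort
          (fun p q => decide (p.2.1 ≤ q.2.1))).map (fun e => e.1)) p)
      = HM.gkey t0 t1 (h+1) (sa01 p) := by
  have hn0 := HM.n0_pos hsent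
  have hn1 := HM.n1_pos hsent
  set pairs := (List.range Z.length).map
      (HM.pairfn (bwtList t0 sa0) (bwtList t1 sa1) Z B) with hpairsdef
  set sorted := pairs.mergeSort (fun p q => decide (p.2.1 ≤ q.2.1)) with hsorteddef
  set Z' := sorted.map (fun e : Bool × A × ℕ => e.1) with hZ'def
  have hperm : sorted.Perm pairs := List.mergeSort_perm pairs _
  have hslen : sorted.length = t0.length + t1.length := by
    rw [hperm.length_eq, hpairsdef, List.length_map, List.length_range, hZlen]
  have hZ'len : Z'.length = t0.length + t1.length := by
    rw [hZ'def, List.length_map, hslen]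
  have hZ'cnt : Z'.count true = t1.length := by
    rw [hZ'def, hsorteddef, hpairsdef, HM.count_Zp_eq]
    exact hZcnt
  have hmain := HM.step_sorted hsent hsa0 hsa1 hsa01 hZlen hZcnt hZkey hB0 hBiff
  rw [← hpairsdef, ← hsorteddef] at hmain
  have hsortedp : ∀ q, q < t0.length + t1.length →
      HM.ekey t0 t1 sa01 h (sorted.getD q default) = HM.gkey t0 t1 (h+1) (sa01 q) := by
    intro q hq
    have h1 := congrArg (fun l : List (List A) => l.getD q []) hmain
    rw [List.getD_eq_getElem _ _ (by rw [List.length_map]; omega),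
      List.getD_eq_getElem _ _ (by simp; omega),
      List.getElem_map, List.getElem_map, List.getElem_range,
      ← List.getD_eq_getElem sorted default (by omega)] at h1
    exact h1
  have hrank : ∀ b : Bool, (Z'.take p).count b
      = (sorted.take p).countP (fun e : Bool × A × ℕ => e.1 == b) := by
    intro b
    rw [hZ'def, ← List.map_take, List.count_eq_countP, List.countP_map]
    rfl
  cases hb : Z'.getD p false with
  | false =>
    obtain ⟨hs, hr, hl⟩ := HM.srcOf_false (sa1 := sa1) hsa0 hZ'len hZ'cnt hp hb
    have hbp : (sorted.getD p default).1 = false := by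
      have h1 : Z'.getD p false = (sorted.getD p default).1 := by
        rw [List.getD_eq_getElem Z' false (n := p) (by omega),
          List.getD_eq_getElem sorted default (n := p) (by omega)]
        exact List.getElem_map _
      rw [h1] at hb
      exact hb
    have hfil := HM.step_filter hsent hsa0 hsa1 hsa01 hZlen hZcnt hZkey hB0 hBiff false
    rw [← hpairsdef, ← hsorteddef] at hfil
    simp only [Bool.false_eq_true, if_false] at hfil
    have hFlen : (sorted.filter (fun e : Bool × A × ℕ => e.1 == false)).length
        = t0.length := by
      have := congrArg List.length hfil
      rwa [List.length_map, List.length_map, List.length_range] at this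
    have hpred : ((fun e : Bool × A × ℕ => e.1 == false) (sorted.getD p default))
        = true := by simp only [beq_iff_eq]; exact hbp
    have hget := HM.filter_getD_count (fun e : Bool × A × ℕ => e.1 == false) default
      sorted p (by omega) hpred
    rw [← hrank false] at hget
    have hridx : (Z'.take p).count false
        < (sorted.filter (fun e : Bool × A × ℕ => e.1 == false)).length := by
      rw [hFlen]; exact hr
    have h3 := congrArg (fun l : List (List A) => l.getD ((Z'.take p).count false) []) hfil
    rw [List.getD_eq_getElem _ _ (by rw [List.length_map]; exact hridx),
      List.getD_eq_getElem _ _ (by simp; exact hr),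
      List.getElem_map, List.getElem_map, List.getElem_range,
      ← List.getD_eq_getElem _ default hridx, hget] at h3
    rw [hs, ← h3]
    exact hsortedp p hp
  | true =>
    obtain ⟨hs, hr, hge, hl⟩ := HM.srcOf_true (sa0 := sa0) hsa1 hZ'len hZ'cnt hp hb
    have hbp : (sorted.getD p default).1 = true := by
      have h1 : Z'.getD p false = (sorted.getD p default).1 := by
        rw [List.getD_eq_getElem Z' false (n := p) (by omega),
          List.getD_eq_getElem sorted default (n := p) (by omega)]
        exact List.getElem_map _
      rw [h1] at hb
      exact hb
    have hfil := HM.step_filter hsent hsa0 hsa1 hsa01 hZlen hZcnt hZkey hB0 hBiff true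
    rw [← hpairsdef, ← hsorteddef] at hfil
    simp only [if_true] at hfil
    have hFlen : (sorted.filter (fun e : Bool × A × ℕ => e.1 == true)).length
        = t1.length := by
      have := congrArg List.length hfil
      rwa [List.length_map, List.length_map, List.length_range] at this
    have hpred : ((fun e : Bool × A × ℕ => e.1 == true) (sorted.getD p default))
        = true := by simp only [beq_iff_eq]; exact hbp
    have hget := HM.filter_getD_count (fun e : Bool × A × ℕ => e.1 == true) default
      sorted p (by omega) hpred
    rw [← hrank true] at hget
    have hridx : (Z'.take p).count true
        < (sorted.filter (fun e : Bool × A × ℕ => e.1 == true)).length := by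
      rw [hFlen]; exact hr
    have h3 := congrArg (fun l : List (List A) => l.getD ((Z'.take p).count true) []) hfil
    rw [List.getD_eq_getElem _ _ (by rw [List.length_map]; exact hridx),
      List.getD_eq_getElem _ _ (by simp; exact hr),
      List.getElem_map, List.getElem_map, List.getElem_range,
      ← List.getD_eq_getElem _ default hridx, hget] at h3
    rw [hs, ← h3]
    exact hsortedp p hp

end Step4

section Step5
variable {A : Type*} [LinearOrder A] [Inhabited A]
variable {t0 t1 : List A} {sa0 sa1 sa01 : ℕ → ℕ}

lemma HM.step_B (hsent : Sentinels t0 t1) (hsa0 : isSuffixArray t0 sa0)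
    (hsa1 : isSuffixArray t1 sa1) (hsa01 : isSuffixArray (t0++t1) sa01)
    {h : ℕ} {Z : List Bool} {B : List ℕ}
    (hZlen : Z.length = t0.length + t1.length) (hZcnt : Z.count true = t1.length)
    (hZkey : ∀ p < t0.length + t1.length,
      HM.gkey t0 t1 h (HM.srcOf t0.length sa0 sa1 Z p) = HM.gkey t0 t1 h (sa01 p))
    (hB0 : B.getD 0 0 ≠ 0)
    (hBiff : ∀ j ≤ t0.length + t1.length,
      (B.getD j 0 ≠ 0 ↔ lcpArr (t0++t1) sa01 j < (h:ℤ)))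
    (hBlen : B.length = t0.length + t1.length + 1)
    {j : ℕ} (hj : j ≤ t0.length + t1.length) :
    (((List.range B.length).map (fun j' =>
        if B.getD j' 0 ≠ 0 then B.getD j' 0
        else if j' < (((List.range Z.length).map
              (HM.pairfn (bwtList t0 sa0) (bwtList t1 sa1) Z B)).mergeSort
            (fun p q => decide (p.2.1 ≤ q.2.1))).length ∧
            (j' = 0 ∨ ((((List.range Z.length).map
              (HM.pairfn (bwtList t0 sa0) (bwtList t1 sa1) Z B)).mergeSort
            (fun p q => decide (p.2.1 ≤ q.2.1))).getD (j' - 1) default).2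
              ≠ ((((List.range Z.length).map
              (HM.pairfn (bwtList t0 sa0) (bwtList t1 sa1) Z B)).mergeSort
            (fun p q => decide (p.2.1 ≤ q.2.1))).getD j' default).2)
          then (h+1) else 0)).getD j 0 ≠ 0)
      ↔ lcpArr (t0++t1) sa01 j < (((h+1 : ℕ)) : ℤ) := by
  have hn0 := HM.n0_pos hsent
  have hn1 := HM.n1_pos hsent
  set pairs := (List.range Z.length).map
      (HM.pairfn (bwtList t0 sa0) (bwtList t1 sa1) Z B) with hpairsdef
  set sorted := pairs.mergeSort (fun p q => decide (p.2.1 ≤ q.2.1)) with hsorteddef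
  have hperm : sorted.Perm pairs := List.mergeSort_perm pairs _
  have hslen : sorted.length = t0.length + t1.length := by
    rw [hperm.length_eq, hpairsdef, List.length_map, List.length_range, hZlen]
  have hmain := HM.step_sorted hsent hsa0 hsa1 hsa01 hZlen hZcnt hZkey hB0 hBiff
  rw [← hpairsdef, ← hsorteddef] at hmain
  have hsortedp : ∀ q, q < t0.length + t1.length →
      HM.ekey t0 t1 sa01 h (sorted.getD q default) = HM.gkey t0 t1 (h+1) (sa01 q) := by
    intro q hq
    have h1 := congrArg (fun l : List (List A) => l.getD q []) hmain
    rw [List.getD_eq_getElem _ _ (by rw [List.length_map]; omega),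
      List.getD_eq_getElem _ _ (by simp; omega),
      List.getElem_map, List.getElem_map, List.getElem_range,
      ← List.getD_eq_getElem sorted default (by omega)] at h1
    exact h1
  have hmem : ∀ e ∈ sorted, ∃ k, k < t0.length + t1.length ∧
      e = HM.pairfn (bwtList t0 sa0) (bwtList t1 sa1) Z B k := by
    intro e he
    have h1 := hperm.mem_iff.mp he
    rw [hpairsdef] at h1
    obtain ⟨k, hk, rfl⟩ := List.mem_map.mp h1
    exact ⟨k, by rw [← hZlen]; exact List.mem_range.mp hk, rfl⟩
  rw [HM.getD_map_range _ _ _ _, if_pos (by omega)]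
  by_cases hcase : lcpArr (t0++t1) sa01 j < (h:ℤ)
  · have hBj : B.getD j 0 ≠ 0 := (hBiff j hj).mpr hcase
    rw [if_pos hBj]
    constructor
    · intro _
      have : ((h:ℤ)) < ((h+1 : ℕ) : ℤ) := by push_cast; omega
      omega
    · intro _; exact hBj
  · have hBj : B.getD j 0 = 0 := by
      by_contra hne
      exact hcase ((hBiff j hj).mp hne)
    rw [if_neg (by rw [hBj]; exact fun hc => hc rfl)]
    obtain ⟨hj0, hjn⟩ := HM.lcpArr_lt_bounds hcase
    have hlcpval := HM.lcpArr_eq (sa01 := sa01) hj0 hjn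
    have hge : h ≤ lcpLen ((t0++t1).drop (sa01 (j-1))) ((t0++t1).drop (sa01 j)) := by
      rw [hlcpval] at hcase
      push_neg at hcase
      exact_mod_cast hcase
    have hne01 : sa01 (j-1) ≠ sa01 j := by
      intro he
      have := HM.sa01_inj hsa01 (show j-1 < t0.length + t1.length by omega) (by omega) he
      omega
    -- direction 2: pair values equal implies lcp ≥ h+1
    have dir2 : (sorted.getD (j-1) default).2 = (sorted.getD j default).2 →
        h + 1 ≤ lcpLen ((t0++t1).drop (sa01 (j-1))) ((t0++t1).drop (sa01 j)) := by
      intro heq2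
      have hkeyeq : HM.ekey t0 t1 sa01 h (sorted.getD (j-1) default)
          = HM.ekey t0 t1 sa01 h (sorted.getD j default) := by
        unfold HM.ekey
        rw [heq2]
      rw [hsortedp (j-1) (by omega), hsortedp j (by omega)] at hkeyeq
      by_contra hlt
      push_neg at hlt
      exact HM.keyNe hsent (HM.sa01_lt hsa01 (by omega)) (HM.sa01_lt hsa01 (by omega))
        hne01 hlt hkeyeq
    -- direction 1: lcp ≥ h+1 implies pair values equal
    have dir1 : h + 1 ≤ lcpLen ((t0++t1).drop (sa01 (j-1))) ((t0++t1).drop (sa01 j)) →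
        (sorted.getD (j-1) default).2 = (sorted.getD j default).2 := by
      intro hll
      have hkeyeq : HM.gkey t0 t1 (h+1) (sa01 (j-1)) = HM.gkey t0 t1 (h+1) (sa01 j) :=
        HM.keyEq hsent (HM.sa01_lt hsa01 (by omega)) (HM.sa01_lt hsa01 (by omega)) hll
      have he1 := hsortedp (j-1) (by omega)
      have he2 := hsortedp j (by omega)
      have hek : HM.ekey t0 t1 sa01 h (sorted.getD (j-1) default)
          = HM.ekey t0 t1 sa01 h (sorted.getD j default) := by
        rw [he1, he2, hkeyeq]
      unfold HM.ekey at hek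
      injection hek with hc ht
      by_cases hv : (sorted.getD (j-1) default).2.1 = t0.getLast!
          ∨ (sorted.getD (j-1) default).2.1 = t1.getLast!
      · exfalso
        have hkey1 : HM.gkey t0 t1 (h+1) (sa01 (j-1))
            = [(sorted.getD (j-1) default).2.1] := by
          rw [← he1]
          unfold HM.ekey
          rw [if_pos hv]
        have hkey2 : HM.gkey t0 t1 (h+1) (sa01 j)
            = [(sorted.getD (j-1) default).2.1] := by
          rw [← hkeyeq]; exact hkey1
        obtain ⟨tl1, hh1⟩ := HM.gkey_head hsent (HM.sa01_lt hsa01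
          (show j-1 < t0.length + t1.length by omega)) (show 0 < h+1 by omega)
        obtain ⟨tl2, hh2⟩ := HM.gkey_head hsent (HM.sa01_lt hsa01
          (show j < t0.length + t1.length by omega)) (show 0 < h+1 by omega)
        rw [hkey1] at hh1
        rw [hkey2] at hh2
        injection hh1 with hc1 _
        injection hh2 with hc2 _
        rcases hv with hv0 | hv0 <;> rw [hv0] at hc1 hc2
        · have u1 := HM.sent_unique0 hsent (HM.sa01_lt hsa01
            (show j-1 < t0.length + t1.length by omega)) hc1.symm
          have u2 := HM.sent_unique0 hsent (HM.sa01_lt hsa01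
            (show j < t0.length + t1.length by omega)) hc2.symm
          exact hne01 (u1.trans u2.symm)
        · have u1 := HM.sent_unique1 hsent (HM.sa01_lt hsa01
            (show j-1 < t0.length + t1.length by omega)) hc1.symm
          have u2 := HM.sent_unique1 hsent (HM.sa01_lt hsa01
            (show j < t0.length + t1.length by omega)) hc2.symm
          exact hne01 (u1.trans u2.symm)
      · have hv' : ¬ ((sorted.getD j default).2.1 = t0.getLast!
            ∨ (sorted.getD j default).2.1 = t1.getLast!) := by
          rw [← hc]; exact hv
        rw [if_neg hv, if_neg hv'] at ht
        -- block-id facts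
        obtain ⟨k1, hk1, hpe1⟩ := hmem (sorted.getD (j-1) default)
          (by rw [List.getD_eq_getElem _ _ (by omega)]; exact List.getElem_mem _)
        obtain ⟨k2, hk2, hpe2⟩ := hmem (sorted.getD j default)
          (by rw [List.getD_eq_getElem _ _ (by omega)]; exact List.getElem_mem _)
        have hbid1 : (sorted.getD (j-1) default).2.2 = blockIdAt B k1 := by
          rw [hpe1]; rfl
        have hbid2 : (sorted.getD j default).2.2 = blockIdAt B k2 := by
          rw [hpe2]; rfl
        have hb1n : (sorted.getD (j-1) default).2.2 < t0.length + t1.length := by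
          rw [hbid1]; have := HM.blockIdAt_le B k1; omega
        have hb2n : (sorted.getD j default).2.2 < t0.length + t1.length := by
          rw [hbid2]; have := HM.blockIdAt_le B k2; omega
        have hlt1 : lcpArr (t0++t1) sa01 ((sorted.getD (j-1) default).2.2) < (h:ℤ) := by
          apply (hBiff _ (by omega)).mp
          rw [hbid1]; exact HM.blockIdAt_ne_zero hB0 k1
        have hlt2 : lcpArr (t0++t1) sa01 ((sorted.getD j default).2.2) < (h:ℤ) := by
          apply (hBiff _ (by omega)).mp
          rw [hbid2]; exact HM.blockIdAt_ne_zero hB0 k2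
        by_cases hbid : (sorted.getD (j-1) default).2.2 = (sorted.getD j default).2.2
        · exact Prod.ext hc hbid
        · exfalso
          have hne' : sa01 ((sorted.getD (j-1) default).2.2)
              ≠ sa01 ((sorted.getD j default).2.2) := by
            intro he
            exact hbid (HM.sa01_inj hsa01 hb1n hb2n he)
          have hlcpb : h ≤ lcpLen ((t0++t1).drop (sa01 ((sorted.getD (j-1) default).2.2)))
              ((t0++t1).drop (sa01 ((sorted.getD j default).2.2))) := by
            by_contra hc2
            push_neg at hc2
            exact HM.keyNe hsent (HM.sa01_lt hsa01 hb1n) (HM.sa01_lt hsa01 hb2n)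
              hne' hc2 ht
          rcases le_total ((sorted.getD (j-1) default).2.2) ((sorted.getD j default).2.2)
            with hle | hle
          · exact hbid (HM.blockstart_eq hsa01 hb1n hb2n hlt1 hlt2 hle hlcpb)
          · refine hbid ((HM.blockstart_eq hsa01 hb2n hb1n hlt2 hlt1 hle ?_).symm)
            rw [HM.lcpLen_comm]; exact hlcpb
    -- final assembly
    constructor
    · intro hcond
      rw [hlcpval]
      by_contra hge2
      push_neg at hge2
      have hge2' : h + 1 ≤ lcpLen ((t0++t1).drop (sa01 (j-1))) ((t0++t1).drop (sa01 j)) := by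
        exact_mod_cast hge2
      have hne := dir1 hge2'
      rw [if_neg (by
        rintro ⟨-, (h1 | h2)⟩
        · omega
        · exact h2 hne)] at hcond
      exact hcond rfl
    · intro hlt2
      rw [if_pos ?_]
      · omega
      refine ⟨by omega, Or.inr ?_⟩
      intro hne
      have := dir2 hne
      rw [hlcpval] at hlt2
      have : ((h:ℤ)+1) ≤ lcpLen ((t0++t1).drop (sa01 (j-1))) ((t0++t1).drop (sa01 j)) := by
        exact_mod_cast this
      push_cast at hlt2
      omega

end Step5

/-! ### The invariant and the main proof -/

def HM.Inv {A : Type*} [LinearOrder A] [Inhabited A] (t0 t1 : List A)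
    (sa0 sa1 sa01 : ℕ → ℕ) (h : ℕ) (ZB : List Bool × List ℕ) : Prop :=
  ZB.1.length = t0.length + t1.length ∧
  ZB.1.count true = t1.length ∧
  (∀ p < t0.length + t1.length,
    HM.gkey t0 t1 h (HM.srcOf t0.length sa0 sa1 ZB.1 p) = HM.gkey t0 t1 h (sa01 p)) ∧
  ZB.2.length = t0.length + t1.length + 1 ∧
  (∀ j ≤ t0.length + t1.length,
    (ZB.2.getD j 0 ≠ 0 ↔ lcpArr (t0++t1) sa01 j < (h:ℤ)))

section Inv
variable {A : Type*} [LinearOrder A] [Inhabited A]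
variable {t0 t1 : List A} {sa0 sa1 sa01 : ℕ → ℕ}

lemma HM.inv_zero (hsent : Sentinels t0 t1) :
    HM.Inv t0 t1 sa0 sa1 sa01 0
      (gapState (bwtList t0 sa0) (bwtList t1 sa1) t0.length t1.length 0) := by
  have hn0 := HM.n0_pos hsent
  have hn1 := HM.n1_pos hsent
  refine ⟨?_, ?_, ?_, ?_, ?_⟩
  · show (List.replicate t0.length false ++ List.replicate t1.length true).length = _
    simp
  · show (List.replicate t0.length false ++ List.replicate t1.length true).count true = _
    rw [List.count_append]
    simp [List.count_replicate]
  · intro p hp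
    unfold HM.gkey
    simp
  · show (1 :: (List.replicate (t0.length + t1.length - 1) 0 ++ [1])).length = _
    simp
    omega
  · intro j hj
    show ((1 :: (List.replicate (t0.length + t1.length - 1) 0 ++ [1])).getD j 0 ≠ 0) ↔ _
    rcases j with _ | j'
    · simp only [List.getD_cons_zero]
      rw [HM.lcpArr_neg (Or.inl rfl)]
      constructor
      · intro _; decide
      · intro _; omega
    · rw [List.getD_cons_succ]
      by_cases hjn : j' + 1 = t0.length + t1.length
      · have hj' : j' = t0.length + t1.length - 1 := by omega
        rw [hj']
        rw [List.getD_append_right _ _ _ _ (by rw [List.length_replicate])]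
        rw [List.length_replicate, Nat.sub_self]
        rw [HM.lcpArr_neg (Or.inr (by omega))]
        constructor
        · intro _; decide
        · intro _; simp
      · have hrep : (List.replicate (t0.length + t1.length - 1) (0:ℕ) ++ [1]).getD j' 0
            = 0 := by
          rw [List.getD_append _ _ _ _ (by rw [List.length_replicate]; omega)]
          rw [List.getD_eq_getElem _ _ (by rw [List.length_replicate]; omega)]
          simp
        rw [hrep]
        rw [HM.lcpArr_eq (by omega) (by omega)]
        constructor
        · intro hne; exact absurd rfl hne
        · intro hlt
          exfalso
          have h0 : (0:ℤ) ≤ (lcpLen ((t0++t1).drop (sa01 (j'+1-1)))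
              ((t0++t1).drop (sa01 (j'+1))) : ℤ) := Int.natCast_nonneg _
          omega

lemma HM.inv_step (hsent : Sentinels t0 t1) (hsa0 : isSuffixArray t0 sa0)
    (hsa1 : isSuffixArray t1 sa1) (hsa01 : isSuffixArray (t0++t1) sa01)
    {h : ℕ} {ZB : List Bool × List ℕ}
    (hinv : HM.Inv t0 t1 sa0 sa1 sa01 h ZB) :
    HM.Inv t0 t1 sa0 sa1 sa01 (h+1)
      (gstep (bwtList t0 sa0) (bwtList t1 sa1) (h+1) ZB) := by
  obtain ⟨hZlen, hZcnt, hZkey, hBlen, hBiff⟩ := hinv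
  have hB0 : ZB.2.getD 0 0 ≠ 0 := by
    apply (hBiff 0 (by omega)).mpr
    rw [HM.lcpArr_neg (Or.inl rfl)]
    have h0 : (0:ℤ) ≤ (h:ℤ) := Int.natCast_nonneg h
    omega
  have hZ1 : (gstep (bwtList t0 sa0) (bwtList t1 sa1) (h+1) ZB).1
      = (((List.range ZB.1.length).map
          (HM.pairfn (bwtList t0 sa0) (bwtList t1 sa1) ZB.1 ZB.2)).mergeSort
        (fun p q => decide (p.2.1 ≤ q.2.1))).map (fun e => e.1) := rfl
  have hB1 : (gstep (bwtList t0 sa0) (bwtList t1 sa1) (h+1) ZB).2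
      = (List.range ZB.2.length).map (fun j =>
          if ZB.2.getD j 0 ≠ 0 then ZB.2.getD j 0
          else if j < (((List.range ZB.1.length).map
                (HM.pairfn (bwtList t0 sa0) (bwtList t1 sa1) ZB.1 ZB.2)).mergeSort
              (fun p q => decide (p.2.1 ≤ q.2.1))).length ∧
              (j = 0 ∨ ((((List.range ZB.1.length).map
                (HM.pairfn (bwtList t0 sa0) (bwtList t1 sa1) ZB.1 ZB.2)).mergeSort
              (fun p q => decide (p.2.1 ≤ q.2.1))).getD (j - 1) default).2
                ≠ ((((List.range ZB.1.length).map
                (HM.pairfn (bwtList t0 sa0) (bwtList t1 sa1) ZB.1 ZB.2)).mergeSort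
              (fun p q => decide (p.2.1 ≤ q.2.1))).getD j default).2)
            then (h+1) else 0) := rfl
  refine ⟨?_, ?_, ?_, ?_, ?_⟩
  · rw [hZ1, List.length_map, (List.mergeSort_perm _ _).length_eq,
      List.length_map, List.length_range, hZlen]
  · rw [hZ1, HM.count_Zp_eq]
    exact hZcnt
  · intro p hp
    rw [hZ1]
    exact HM.step_key hsent hsa0 hsa1 hsa01 hZlen hZcnt hZkey hB0 hBiff hp
  · rw [hB1, List.length_map, List.length_range, hBlen]
  · intro j hj
    rw [hB1]
    exact HM.step_B hsent hsa0 hsa1 hsa01 hZlen hZcnt hZkey hB0 hBiff hBlen hj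

lemma HM.inv_all (hsent : Sentinels t0 t1) (hsa0 : isSuffixArray t0 sa0)
    (hsa1 : isSuffixArray t1 sa1) (hsa01 : isSuffixArray (t0++t1) sa01) (h : ℕ) :
    HM.Inv t0 t1 sa0 sa1 sa01 h
      (gapState (bwtList t0 sa0) (bwtList t1 sa1) t0.length t1.length h) := by
  induction h with
  | zero => exact HM.inv_zero hsent
  | succ h ih => exact HM.inv_step hsent hsa0 hsa1 hsa01 ih

end Inv

/-- at the end of iteration `h` of the modified H&M algorithm,
for every maximal interval `[ℓ,m]` with `lcp01[ℓ] < h`,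
`min(lcp01[ℓ+1..m]) ≥ h` and `lcp01[m+1] < h`, the marker array satisfies
`B[ℓ] ≠ 0`, `B[ℓ+1] = ⋯ = B[m] = 0`, `B[m+1] ≠ 0`, and `Z_h[ℓ,m]` is one of
the logical blocks of `Z_h` (all its entries share the same length-`h` key). -/
theorem gap_marker_invariant [LinearOrder A] [Inhabited A]
    (t0 t1 : List A) (sa0 sa1 sa01 : ℕ → ℕ)
    (hsent : Sentinels t0 t1)
    (hsa0 : isSuffixArray t0 sa0) (hsa1 : isSuffixArray t1 sa1)
    (hsa01 : isSuffixArray (t0 ++ t1) sa01)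
    (h ℓ m : ℕ) (hlm : ℓ ≤ m) (hmn : m < t0.length + t1.length)
    (h1 : lcpArr (t0 ++ t1) sa01 ℓ < h)
    (h2 : ∀ i, ℓ < i → i ≤ m → (h : ℤ) ≤ lcpArr (t0 ++ t1) sa01 i)
    (h3 : lcpArr (t0 ++ t1) sa01 (m + 1) < h) :
    (gapState (bwtList t0 sa0) (bwtList t1 sa1) t0.length t1.length h).2.getD ℓ 0
        ≠ 0 ∧
    (∀ i, ℓ < i → i ≤ m →
      (gapState (bwtList t0 sa0) (bwtList t1 sa1) t0.length t1.length h).2.getD i 0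
        = 0) ∧
    (gapState (bwtList t0 sa0) (bwtList t1 sa1) t0.length t1.length h).2.getD
        (m + 1) 0 ≠ 0 ∧
    (∀ p q, ℓ ≤ p → p ≤ q → q ≤ m →
      keyAt t0 t1 sa0 sa1 h
          (gapState (bwtList t0 sa0) (bwtList t1 sa1) t0.length t1.length h).1 p =
        keyAt t0 t1 sa0 sa1 h
          (gapState (bwtList t0 sa0) (bwtList t1 sa1) t0.length t1.length h).1 q) := by
  
  obtain ⟨hZlen, hZcnt, hZkey, hBlen, hBiff⟩ :=
    HM.inv_all (sa01 := sa01) hsent hsa0 hsa1 hsa01 h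
  refine ⟨?_, ?_, ?_, ?_⟩
  · exact (hBiff ℓ (by omega)).mpr h1
  · intro i hi1 hi2
    by_contra hne
    have hlt := (hBiff i (by omega)).mp hne
    have hge := h2 i hi1 hi2
    omega
  · exact (hBiff (m+1) (by omega)).mpr h3
  · intro p q hp hpq hq
    rw [HM.keyAt_eq hsa0 hsa1 hZlen hZcnt (by omega),
      HM.keyAt_eq hsa0 hsa1 hZlen hZcnt (by omega)]
    rw [hZkey p (by omega), hZkey q (by omega)]
    rcases eq_or_lt_of_le hpq with rfl | hlt
    · rfl
    · apply HM.keyEq hsent (HM.sa01_lt hsa01 (by omega)) (HM.sa01_lt hsa01 (by omega))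
      exact HM.lcp_pair hsa01 hlt (by omega)
        (fun i hi1 hi2 => h2 i (by omega) (by omega))
end
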